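/- arXiv:1708.00821 — 3 statements merged into one kernel-verified Lean document; each statement's English description precedes it below -/
import Mathlib

section
/- Let n ≥ 1, s ∈ (0,1), u₀ ∈ L¹(ℝⁿ) with total mass M = ∫_{ℝⁿ} u₀(x) dx, and let u(x,t) = ∫_{ℝⁿ} P(x−y,t;s) u₀(y) dy be the solution of the fractional heat equation with initial datum u₀. Then t^{n/(2s)} ‖u(·,t) − M·P(·,t;s)‖_{L^∞(ℝⁿ)} → 0 as t → ∞. -/
open MeasureTheory Real Filter

/-- The fractional heat kernel `P(x,t;s)` on `ℝⁿ`: the inverse Fourier transform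
in space of `ξ ↦ exp(-t |ξ|^(2s))`. -/
noncomputable def fracP (n : ℕ) (s : ℝ) (x : EuclideanSpace ℝ (Fin n)) (t : ℝ) : ℝ :=
  ((2 * π) ^ n)⁻¹ * (∫ ξ : EuclideanSpace ℝ (Fin n),
    Complex.exp (Complex.I * ((inner ℝ x ξ : ℝ) : ℂ)) *
      Complex.exp (-(t : ℂ) * ((‖ξ‖ ^ (2 * s) : ℝ) : ℂ))).re

/-- The solution of the fractional heat equation with initial datum `u₀`:
`u(x,t) = ∫ P(x-y,t;s) u₀(y) dy`. -/
noncomputable def fracSol (n : ℕ) (s : ℝ) (u₀ : EuclideanSpace ℝ (Fin n) → ℝ)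
    (x : EuclideanSpace ℝ (Fin n)) (t : ℝ) : ℝ :=
  ∫ y, fracP n s (x - y) t * u₀ y

open Topology


lemma exists_bound_aux (k : ℕ) (t p : ℝ) (ht : 0 < t) (hp : 0 < p) :
    ∃ C : ℝ, 1 ≤ C ∧ ∀ r : ℝ, 0 ≤ r → (1 + r) ^ k * Real.exp (-t * r ^ p) ≤ C := by
  have hcont : Continuous fun r : ℝ => (1 + r) ^ k * Real.exp (-t * r ^ p) := by
    apply Continuous.mul (by continuity)
    apply Real.continuous_exp.comp
    apply Continuous.mul continuous_const
    exact continuous_iff_continuousAt.2 fun x => Real.continuousAt_rpow_const x p (Or.inr hp.le)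
  have h0 : Tendsto (fun u : ℝ => (2:ℝ)^k * (u ^ ((k:ℝ)/p) * Real.exp (-t * u))) atTop (𝓝 0) := by
    simpa using (tendsto_rpow_mul_exp_neg_mul_atTop_nhds_zero ((k:ℝ)/p) t ht).const_mul ((2:ℝ)^k)
  have h1 : Tendsto (fun r : ℝ => (2:ℝ)^k * ((r^p) ^ ((k:ℝ)/p) * Real.exp (-t * r ^ p)))
      atTop (𝓝 0) := h0.comp (tendsto_rpow_atTop hp)
  have h2 : Tendsto (fun r : ℝ => (1 + r) ^ k * Real.exp (-t * r ^ p)) atTop (𝓝 0) := by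
    refine squeeze_zero' ?_ ?_ h1
    · filter_upwards [eventually_ge_atTop (0:ℝ)] with r hr
      positivity
    · filter_upwards [eventually_ge_atTop (1:ℝ)] with r hr
      have hr0 : (0:ℝ) ≤ r := by linarith
      have : (1 + r) ^ k ≤ (2:ℝ)^k * (r^p) ^ ((k:ℝ)/p) := by
        have e1 : (r^p) ^ ((k:ℝ)/p) = r ^ (k:ℝ) := by
          rw [← Real.rpow_mul hr0]
          congr 1
          field_simp
        rw [e1, Real.rpow_natCast, ← mul_pow]
        apply pow_le_pow_left₀ (by linarith)
        linarith
      calc (1 + r) ^ k * Real.exp (-t * r ^ p)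
          ≤ ((2:ℝ)^k * (r^p) ^ ((k:ℝ)/p)) * Real.exp (-t * r ^ p) := by
            apply mul_le_mul_of_nonneg_right this (Real.exp_nonneg _)
        _ = (2:ℝ)^k * ((r^p) ^ ((k:ℝ)/p) * Real.exp (-t * r ^ p)) := by ring
  obtain ⟨R, hR⟩ := (h2.eventually (eventually_le_nhds (by norm_num : (0:ℝ) < 1))).exists_forall_of_atTop
  set R' := max R 0 with hR'
  obtain ⟨m, hm, hmax⟩ := (isCompact_Icc (a := (0:ℝ)) (b := R')).exists_isMaxOn
    ⟨0, by simp [hR', le_max_right]⟩ hcont.continuousOn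
  refine ⟨max ((1 + m) ^ k * Real.exp (-t * m ^ p)) 1, le_max_right _ _, fun r hr => ?_⟩
  rcases le_or_gt r R' with h | h
  · exact le_max_of_le_left (hmax ⟨hr, h⟩)
  · exact le_max_of_le_right (hR r (le_trans (le_max_left R 0) h.le))


lemma integrable_norm_pow_exp (n : ℕ) (t p : ℝ) (ht : 0 < t) (hp : 0 < p) (a : ℕ) (ha : a ≤ 1) :
    Integrable (fun ξ : EuclideanSpace ℝ (Fin n) =>
      ‖ξ‖ ^ a * Real.exp (-t * ‖ξ‖ ^ p)) := by
  obtain ⟨C, hC1, hC⟩ := exists_bound_aux (n + 2) t p ht hp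
  have hcont : Continuous fun ξ : EuclideanSpace ℝ (Fin n) =>
      ‖ξ‖ ^ a * Real.exp (-t * ‖ξ‖ ^ p) := by
    apply Continuous.mul (by continuity)
    apply Real.continuous_exp.comp
    apply Continuous.mul continuous_const
    exact (continuous_iff_continuousAt.2 fun x =>
      Real.continuousAt_rpow_const x p (Or.inr hp.le)).comp continuous_norm
  have hint : Integrable (fun ξ : EuclideanSpace ℝ (Fin n) =>
      C * (1 + ‖ξ‖) ^ (-((n:ℝ) + 1)) ) := by
    apply Integrable.const_mul
    apply integrable_one_add_norm (E := EuclideanSpace ℝ (Fin n))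
    rw [finrank_euclideanSpace_fin]
    linarith
  apply hint.mono' hcont.aestronglyMeasurable
  filter_upwards with ξ
  set r : ℝ := ‖ξ‖ with hr
  have hr0 : 0 ≤ r := norm_nonneg _
  have h1r : (0:ℝ) < 1 + r := by linarith
  rw [Real.norm_of_nonneg (by positivity)]
  have key : r ^ a * Real.exp (-t * r ^ p) * (1 + r) ^ ((n:ℝ) + 1) ≤ C := by
    have e1 : (1 + r) ^ ((n:ℝ) + 1) = (1 + r) ^ (n + 1 : ℕ) := by
      rw [← Real.rpow_natCast (1+r) (n+1)]
      norm_num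
    rw [e1]
    have h2 : r ^ a * (1 + r) ^ (n + 1 : ℕ) ≤ (1 + r) ^ (n + 2 : ℕ) := by
      have : r ^ a ≤ (1 + r) := by
        interval_cases a <;> simp <;> linarith
      calc r ^ a * (1 + r) ^ (n + 1 : ℕ) ≤ (1 + r) * (1 + r) ^ (n + 1 : ℕ) :=
            mul_le_mul_of_nonneg_right this (by positivity)
        _ = (1 + r) ^ (n + 2 : ℕ) := by ring
    calc r ^ a * Real.exp (-t * r ^ p) * (1 + r) ^ (n + 1 : ℕ)
        = (r ^ a * (1 + r) ^ (n + 1 : ℕ)) * Real.exp (-t * r ^ p) := by ring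
      _ ≤ (1 + r) ^ (n + 2 : ℕ) * Real.exp (-t * r ^ p) :=
          mul_le_mul_of_nonneg_right h2 (Real.exp_nonneg _)
      _ ≤ C := hC r hr0
  have hpos : (0:ℝ) < (1 + r) ^ ((n:ℝ) + 1) := Real.rpow_pos_of_pos h1r _
  rw [Real.rpow_neg h1r.le, ← div_eq_mul_inv, le_div_iff₀ hpos]
  exact key

lemma norm_exp_I_sub_exp_I (a b : ℝ) :
    ‖Complex.exp (Complex.I * a) - Complex.exp (Complex.I * b)‖ ≤ |a - b| := by
  have hderiv : ∀ τ : ℝ, HasDerivAt (fun τ : ℝ => Complex.exp (Complex.I * τ))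
      (Complex.I * Complex.exp (Complex.I * τ)) τ := by
    intro τ
    have h1 : HasDerivAt (fun τ : ℝ => (Complex.I * τ : ℂ)) Complex.I τ := by
      simpa using ((hasDerivAt_id (τ:ℂ)).const_mul Complex.I).comp_ofReal
    simpa [mul_comm] using h1.cexp
  have hcont : Continuous fun τ : ℝ => Complex.I * Complex.exp (Complex.I * τ) := by
    continuity
  have heq : Complex.exp (Complex.I * a) - Complex.exp (Complex.I * b) =
      ∫ τ in b..a, Complex.I * Complex.exp (Complex.I * τ) := by
    rw [intervalIntegral.integral_eq_sub_of_hasDerivAt (fun τ _ => hderiv τ)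
      (hcont.intervalIntegrable b a)]
  rw [heq]
  have := intervalIntegral.norm_integral_le_of_norm_le_const
    (C := 1) (f := fun τ : ℝ => Complex.I * Complex.exp (Complex.I * τ)) (a := b) (b := a) ?_
  · simpa [abs_sub_comm] using this
  · intro τ _
    simp [Complex.norm_exp]

section kernel
variable {n : ℕ} {s t : ℝ}

lemma continuous_integrand (hs : 0 < s) (x : EuclideanSpace ℝ (Fin n)) :
    Continuous (fun ξ : EuclideanSpace ℝ (Fin n) =>
      Complex.exp (Complex.I * ((inner ℝ x ξ : ℝ) : ℂ)) *
        Complex.exp (-(t : ℂ) * ((‖ξ‖ ^ (2 * s) : ℝ) : ℂ))) := by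
  have h1 : Continuous fun ξ : EuclideanSpace ℝ (Fin n) => (inner ℝ x ξ : ℝ) :=
    continuous_const.inner continuous_id
  have h2 : Continuous fun ξ : EuclideanSpace ℝ (Fin n) => ‖ξ‖ ^ (2 * s) :=
    (continuous_iff_continuousAt.2 fun r =>
      Real.continuousAt_rpow_const r (2 * s) (Or.inr (by linarith))).comp continuous_norm
  exact ((Complex.continuous_exp.comp
      ((continuous_const.mul (Complex.continuous_ofReal.comp h1))))).mul
    (Complex.continuous_exp.comp (continuous_const.mul (Complex.continuous_ofReal.comp h2)))

lemma norm_integrand (x : EuclideanSpace ℝ (Fin n)) (ξ : EuclideanSpace ℝ (Fin n)) :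
    ‖Complex.exp (Complex.I * ((inner ℝ x ξ : ℝ) : ℂ)) *
        Complex.exp (-(t : ℂ) * ((‖ξ‖ ^ (2 * s) : ℝ) : ℂ))‖ =
      Real.exp (-t * ‖ξ‖ ^ (2 * s)) := by
  rw [norm_mul]
  simp [Complex.norm_exp]

lemma integrable_integrand (hs : 0 < s) (ht : 0 < t) (x : EuclideanSpace ℝ (Fin n)) :
    Integrable (fun ξ : EuclideanSpace ℝ (Fin n) =>
      Complex.exp (Complex.I * ((inner ℝ x ξ : ℝ) : ℂ)) *
        Complex.exp (-(t : ℂ) * ((‖ξ‖ ^ (2 * s) : ℝ) : ℂ))) := by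
  have base := integrable_norm_pow_exp n t (2 * s) ht (by linarith) 0 (by norm_num)
  simp only [pow_zero, one_mul] at base
  apply base.mono' (continuous_integrand hs x).aestronglyMeasurable
  filter_upwards with ξ
  rw [norm_integrand]

lemma fracP_abs_le (hs : 0 < s) (ht : 0 < t) (x : EuclideanSpace ℝ (Fin n)) :
    |fracP n s x t| ≤ ((2 * π) ^ n)⁻¹ * ∫ ξ : EuclideanSpace ℝ (Fin n),
      Real.exp (-t * ‖ξ‖ ^ (2 * s)) := by
  have hA : (0:ℝ) ≤ ((2 * π) ^ n)⁻¹ := by positivity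
  rw [fracP, abs_mul, abs_of_nonneg hA]
  apply mul_le_mul_of_nonneg_left _ hA
  calc |(∫ ξ : EuclideanSpace ℝ (Fin n),
      Complex.exp (Complex.I * ((inner ℝ x ξ : ℝ) : ℂ)) *
        Complex.exp (-(t : ℂ) * ((‖ξ‖ ^ (2 * s) : ℝ) : ℂ))).re|
      ≤ ‖∫ ξ : EuclideanSpace ℝ (Fin n),
        Complex.exp (Complex.I * ((inner ℝ x ξ : ℝ) : ℂ)) *
          Complex.exp (-(t : ℂ) * ((‖ξ‖ ^ (2 * s) : ℝ) : ℂ))‖ := Complex.abs_re_le_norm _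
    _ ≤ ∫ ξ : EuclideanSpace ℝ (Fin n), Real.exp (-t * ‖ξ‖ ^ (2 * s)) := by
        apply norm_integral_le_of_norm_le
        · have := integrable_norm_pow_exp n t (2 * s) ht (by linarith) 0 (by norm_num)
          simpa using this
        · filter_upwards with ξ
          rw [norm_integrand]

lemma fracP_sub_abs_le (hs : 0 < s) (ht : 0 < t) (x y : EuclideanSpace ℝ (Fin n)) :
    |fracP n s x t - fracP n s y t| ≤
      (((2 * π) ^ n)⁻¹ * ∫ ξ : EuclideanSpace ℝ (Fin n),
        ‖ξ‖ * Real.exp (-t * ‖ξ‖ ^ (2 * s))) * ‖x - y‖ := by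
  have hA : (0:ℝ) ≤ ((2 * π) ^ n)⁻¹ := by positivity
  rw [fracP, fracP, ← mul_sub, abs_mul, abs_of_nonneg hA, mul_assoc]
  apply mul_le_mul_of_nonneg_left _ hA
  rw [← Complex.sub_re, ← integral_sub (integrable_integrand hs ht x) (integrable_integrand hs ht y)]
  calc |(∫ ξ : EuclideanSpace ℝ (Fin n),
        (Complex.exp (Complex.I * ((inner ℝ x ξ : ℝ) : ℂ)) *
          Complex.exp (-(t : ℂ) * ((‖ξ‖ ^ (2 * s) : ℝ) : ℂ)) -
         Complex.exp (Complex.I * ((inner ℝ y ξ : ℝ) : ℂ)) *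
          Complex.exp (-(t : ℂ) * ((‖ξ‖ ^ (2 * s) : ℝ) : ℂ)))).re|
      ≤ ‖∫ ξ : EuclideanSpace ℝ (Fin n),
        (Complex.exp (Complex.I * ((inner ℝ x ξ : ℝ) : ℂ)) *
          Complex.exp (-(t : ℂ) * ((‖ξ‖ ^ (2 * s) : ℝ) : ℂ)) -
         Complex.exp (Complex.I * ((inner ℝ y ξ : ℝ) : ℂ)) *
          Complex.exp (-(t : ℂ) * ((‖ξ‖ ^ (2 * s) : ℝ) : ℂ)))‖ := Complex.abs_re_le_norm _
    _ ≤ ∫ ξ : EuclideanSpace ℝ (Fin n), ‖x - y‖ * (‖ξ‖ * Real.exp (-t * ‖ξ‖ ^ (2 * s))) := by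
        apply norm_integral_le_of_norm_le
        · have := (integrable_norm_pow_exp n t (2 * s) ht (by linarith) 1 le_rfl).const_mul ‖x - y‖
          simpa using this
        · filter_upwards with ξ
          rw [← sub_mul, norm_mul]
          have h1 : ‖Complex.exp (Complex.I * ((inner ℝ x ξ : ℝ) : ℂ)) -
              Complex.exp (Complex.I * ((inner ℝ y ξ : ℝ) : ℂ))‖ ≤ ‖x - y‖ * ‖ξ‖ := by
            refine (norm_exp_I_sub_exp_I _ _).trans ?_
            rw [← inner_sub_left]
            exact abs_real_inner_le_norm _ _
          have h2 : ‖Complex.exp (-(t : ℂ) * ((‖ξ‖ ^ (2 * s) : ℝ) : ℂ))‖ =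
              Real.exp (-t * ‖ξ‖ ^ (2 * s)) := by simp [Complex.norm_exp]
          rw [h2, ← mul_assoc]
          exact mul_le_mul_of_nonneg_right h1 (Real.exp_nonneg _)
    _ = ‖x - y‖ * ∫ ξ : EuclideanSpace ℝ (Fin n), ‖ξ‖ * Real.exp (-t * ‖ξ‖ ^ (2 * s)) :=
        integral_const_mul _ _
    _ = (∫ ξ : EuclideanSpace ℝ (Fin n), ‖ξ‖ * Real.exp (-t * ‖ξ‖ ^ (2 * s))) * ‖x - y‖ :=
        mul_comm _ _

lemma fracP_scaling (hs : 0 < s) (ht : 0 < t) (x : EuclideanSpace ℝ (Fin n)) :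
    fracP n s x t = t ^ (-(n : ℝ) / (2 * s)) *
      fracP n s ((t ^ (-(1 : ℝ) / (2 * s))) • x) 1 := by
  set c : ℝ := t ^ (-(1 : ℝ) / (2 * s)) with hc
  have hcpos : 0 < c := Real.rpow_pos_of_pos ht _
  have hc2s : t * c ^ (2 * s) = 1 := by
    have h1 : c ^ (2 * s) = t ^ ((-(1:ℝ) / (2 * s)) * (2 * s)) := by
      rw [hc, ← Real.rpow_mul ht.le]
    have h2 : (-(1:ℝ) / (2 * s)) * (2 * s) = -1 := by field_simp
    rw [h1, h2, Real.rpow_neg_one, mul_inv_cancel₀ ht.ne']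
  have hcn : (c : ℝ) ^ (n : ℕ) = t ^ (-(n : ℝ) / (2 * s)) := by
    rw [hc, ← Real.rpow_natCast (t ^ (-(1:ℝ) / (2 * s))) n, ← Real.rpow_mul ht.le]
    congr 1
    field_simp
  have hkey : ∀ ξ : EuclideanSpace ℝ (Fin n),
      Complex.exp (Complex.I * ((inner ℝ x (c • ξ) : ℝ) : ℂ)) *
        Complex.exp (-(t : ℂ) * ((‖c • ξ‖ ^ (2 * s) : ℝ) : ℂ)) =
      Complex.exp (Complex.I * ((inner ℝ (c • x) ξ : ℝ) : ℂ)) *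
        Complex.exp (-((1:ℝ) : ℂ) * ((‖ξ‖ ^ (2 * s) : ℝ) : ℂ)) := by
    intro ξ
    have e1 : (inner ℝ x (c • ξ) : ℝ) = (inner ℝ (c • x) ξ : ℝ) := by
      rw [real_inner_smul_right, real_inner_smul_left]
    have e2 : ‖c • ξ‖ ^ (2 * s) = c ^ (2 * s) * ‖ξ‖ ^ (2 * s) := by
      rw [norm_smul, Real.norm_of_nonneg hcpos.le, Real.mul_rpow hcpos.le (norm_nonneg _)]
    rw [e1, e2]
    congr 2
    have hct' : (t : ℂ) * ((c ^ (2 * s) : ℝ) : ℂ) = 1 := by exact_mod_cast hc2s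
    push_cast
    linear_combination (-((‖ξ‖ ^ (2 * s) : ℝ) : ℂ)) * hct'
  have hsmul := MeasureTheory.Measure.integral_comp_smul (μ := volume)
    (fun ξ : EuclideanSpace ℝ (Fin n) =>
      Complex.exp (Complex.I * ((inner ℝ x ξ : ℝ) : ℂ)) *
        Complex.exp (-(t : ℂ) * ((‖ξ‖ ^ (2 * s) : ℝ) : ℂ))) c
  rw [finrank_euclideanSpace_fin] at hsmul
  have habs : |((c ^ (n:ℕ) : ℝ))⁻¹| = (c ^ (n:ℕ))⁻¹ := by
    rw [abs_of_nonneg]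
    positivity
  have hmain : (∫ ξ : EuclideanSpace ℝ (Fin n),
      Complex.exp (Complex.I * ((inner ℝ x ξ : ℝ) : ℂ)) *
        Complex.exp (-(t : ℂ) * ((‖ξ‖ ^ (2 * s) : ℝ) : ℂ))) =
      (c ^ (n:ℕ)) • ∫ ξ : EuclideanSpace ℝ (Fin n),
        Complex.exp (Complex.I * ((inner ℝ (c • x) ξ : ℝ) : ℂ)) *
          Complex.exp (-((1:ℝ) : ℂ) * ((‖ξ‖ ^ (2 * s) : ℝ) : ℂ)) := by
    have := hsmul
    rw [habs] at this
    simp only [hkey] at this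
    rw [this, smul_smul, mul_inv_cancel₀ (by positivity : (c ^ (n:ℕ) : ℝ) ≠ 0), one_smul]
  rw [fracP, fracP, hmain]
  rw [Complex.real_smul, Complex.mul_re, Complex.ofReal_re, Complex.ofReal_im]
  push_cast
  rw [hcn]
  ring
end kernel


theorem fracHeat_Linfty_convergence_to_fundamental
    (n : ℕ) (hn : 1 ≤ n) (s : ℝ) (hs : s ∈ Set.Ioo (0:ℝ) 1)
    (u₀ : EuclideanSpace ℝ (Fin n) → ℝ) (hu₀ : Integrable u₀)
    (M : ℝ) (hM : M = ∫ x, u₀ x) :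
    Tendsto (fun t : ℝ => ENNReal.ofReal (t ^ ((n : ℝ) / (2 * s))) *
        eLpNorm (fun x => fracSol n s u₀ x t - M * fracP n s x t) ⊤ volume)
      atTop (nhds 0) := by
  obtain ⟨hs0, hs1⟩ := hs
  have hs2 : (0:ℝ) < 2 * s := by linarith
  set A : ℝ := ((2 * π) ^ n)⁻¹ with hA
  have hA0 : (0:ℝ) ≤ A := by positivity
  set C₀ : ℝ := A * ∫ ξ : EuclideanSpace ℝ (Fin n), Real.exp (-1 * ‖ξ‖ ^ (2*s)) with hC₀def
  set L : ℝ := A * ∫ ξ : EuclideanSpace ℝ (Fin n), ‖ξ‖ * Real.exp (-1 * ‖ξ‖ ^ (2*s)) with hLdef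
  have hC₀ : ∀ z, |fracP n s z 1| ≤ C₀ := fun z => fracP_abs_le hs0 one_pos z
  have hC₀0 : (0:ℝ) ≤ C₀ := le_trans (abs_nonneg _) (hC₀ 0)
  have hL : ∀ z w : EuclideanSpace ℝ (Fin n),
      |fracP n s z 1 - fracP n s w 1| ≤ L * ‖z - w‖ := fun z w => fracP_sub_abs_le hs0 one_pos z w
  have hL0 : (0:ℝ) ≤ L := by
    apply mul_nonneg hA0
    apply integral_nonneg
    intro ξ
    positivity
  -- pointwise kernel difference bound
  have hdiff : ∀ t : ℝ, 0 < t → ∀ z w : EuclideanSpace ℝ (Fin n),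
      |fracP n s z t - fracP n s w t| ≤ t ^ (-(n:ℝ)/(2*s)) *
        min (L * (t ^ (-(1:ℝ)/(2*s)) * ‖z - w‖)) (2 * C₀) := by
    intro t ht z w
    have hc : (0:ℝ) < t ^ (-(1:ℝ)/(2*s)) := Real.rpow_pos_of_pos ht _
    rw [fracP_scaling hs0 ht z, fracP_scaling hs0 ht w, ← mul_sub, abs_mul,
      abs_of_nonneg (Real.rpow_nonneg ht.le _)]
    apply mul_le_mul_of_nonneg_left _ (Real.rpow_nonneg ht.le _)
    apply le_min
    · refine (hL _ _).trans (le_of_eq ?_)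
      rw [← smul_sub, norm_smul, Real.norm_of_nonneg hc.le]
    · calc |fracP n s (t ^ (-(1:ℝ)/(2*s)) • z) 1 - fracP n s (t ^ (-(1:ℝ)/(2*s)) • w) 1|
          ≤ |fracP n s (t ^ (-(1:ℝ)/(2*s)) • z) 1| + |fracP n s (t ^ (-(1:ℝ)/(2*s)) • w) 1| :=
            abs_sub _ _
        _ ≤ C₀ + C₀ := add_le_add (hC₀ _) (hC₀ _)
        _ = 2 * C₀ := by ring
  -- pointwise kernel bound
  have hPbdd : ∀ t : ℝ, 0 < t → ∀ z : EuclideanSpace ℝ (Fin n),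
      |fracP n s z t| ≤ t ^ (-(n:ℝ)/(2*s)) * C₀ := by
    intro t ht z
    rw [fracP_scaling hs0 ht z, abs_mul, abs_of_nonneg (Real.rpow_nonneg ht.le _)]
    exact mul_le_mul_of_nonneg_left (hC₀ _) (Real.rpow_nonneg ht.le _)
  -- continuity of the kernel
  have hPcont : ∀ t : ℝ, 0 < t → Continuous (fun z : EuclideanSpace ℝ (Fin n) => fracP n s z t) := by
    intro t ht
    refine (LipschitzWith.of_dist_le_mul
      (K := (A * ∫ ξ : EuclideanSpace ℝ (Fin n), ‖ξ‖ * Real.exp (-t * ‖ξ‖ ^ (2*s))).toNNReal)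
      (fun z w => ?_)).continuous
    rw [Real.dist_eq, dist_eq_norm]
    refine (fracP_sub_abs_le hs0 ht z w).trans ?_
    exact mul_le_mul_of_nonneg_right (Real.le_coe_toNNReal _) (norm_nonneg _)
  -- the quantity D t
  set D : ℝ → ℝ := fun t => ∫ y, min (L * (t ^ (-(1:ℝ)/(2*s)) * ‖y‖)) (2*C₀) * |u₀ y| with hD
  -- integrability facts for fixed t > 0, x
  have hminint : ∀ t : ℝ, 0 < t → Integrable
      (fun y : EuclideanSpace ℝ (Fin n) => min (L * (t ^ (-(1:ℝ)/(2*s)) * ‖y‖)) (2*C₀) * |u₀ y|) := by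
    intro t ht
    have hc : (0:ℝ) < t ^ (-(1:ℝ)/(2*s)) := Real.rpow_pos_of_pos ht _
    refine Integrable.bdd_mul (c := 2*C₀) hu₀.abs ?_ (Filter.Eventually.of_forall fun y => ?_)
    · exact ((continuous_const.mul (continuous_const.mul continuous_norm)).min
        continuous_const).aestronglyMeasurable
    · rw [Real.norm_eq_abs, abs_of_nonneg (le_min (by positivity) (by positivity))]
      exact min_le_right _ _
  have hint1 : ∀ t : ℝ, 0 < t → ∀ x : EuclideanSpace ℝ (Fin n),
      Integrable (fun y => fracP n s (x - y) t * u₀ y) := by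
    intro t ht x
    refine Integrable.bdd_mul (c := t ^ (-(n:ℝ)/(2*s)) * C₀) hu₀ ?_ (Filter.Eventually.of_forall fun y => ?_)
    · exact ((hPcont t ht).comp (continuous_const.sub continuous_id)).aestronglyMeasurable
    · rw [Real.norm_eq_abs]
      exact hPbdd t ht _
  -- claim 1: uniform pointwise bound for the solution
  have claim1 : ∀ t : ℝ, 0 < t → ∀ x : EuclideanSpace ℝ (Fin n),
      |fracSol n s u₀ x t - M * fracP n s x t| ≤ t ^ (-(n:ℝ)/(2*s)) * D t := by
    intro t ht x
    have e : fracSol n s u₀ x t - M * fracP n s x t =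
        ∫ y, (fracP n s (x - y) t - fracP n s x t) * u₀ y := by
      have e2 : M * fracP n s x t = ∫ y, fracP n s x t * u₀ y := by
        rw [integral_const_mul, hM]; ring
      rw [fracSol, e2, ← integral_sub (hint1 t ht x) (hu₀.const_mul _)]
      congr 1; funext y; ring
    rw [e, ← Real.norm_eq_abs]
    calc ‖∫ y, (fracP n s (x - y) t - fracP n s x t) * u₀ y‖
        ≤ ∫ y, t ^ (-(n:ℝ)/(2*s)) *
            (min (L * (t ^ (-(1:ℝ)/(2*s)) * ‖y‖)) (2*C₀) * |u₀ y|) := by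
          apply norm_integral_le_of_norm_le ((hminint t ht).const_mul _)
          filter_upwards with y
          rw [Real.norm_eq_abs, abs_mul]
          have hxy : ‖(x - y) - x‖ = ‖y‖ := by
            rw [show (x - y) - x = -y by abel, norm_neg]
          have := hdiff t ht (x - y) x
          rw [hxy] at this
          calc |fracP n s (x - y) t - fracP n s x t| * |u₀ y|
              ≤ (t ^ (-(n:ℝ)/(2*s)) * min (L * (t ^ (-(1:ℝ)/(2*s)) * ‖y‖)) (2*C₀)) * |u₀ y| :=
                mul_le_mul_of_nonneg_right this (abs_nonneg _)
            _ = t ^ (-(n:ℝ)/(2*s)) * (min (L * (t ^ (-(1:ℝ)/(2*s)) * ‖y‖)) (2*C₀) * |u₀ y|) := by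
                ring
      _ = t ^ (-(n:ℝ)/(2*s)) * D t := integral_const_mul _ _
  -- claim 2: D tends to zero
  have claim2 : Tendsto D atTop (𝓝 0) := by
    have h0 : Tendsto (fun t : ℝ => t ^ (-(1:ℝ)/(2*s))) atTop (𝓝 0) := by
      rw [show -(1:ℝ)/(2*s) = -(1/(2*s)) by ring]
      exact tendsto_rpow_neg_atTop (by positivity)
    have := MeasureTheory.tendsto_integral_filter_of_dominated_convergence
      (μ := volume) (l := atTop) (F := fun (t : ℝ) (y : EuclideanSpace ℝ (Fin n)) =>
        min (L * (t ^ (-(1:ℝ)/(2*s)) * ‖y‖)) (2*C₀) * |u₀ y|)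
      (f := fun _ => (0:ℝ)) (bound := fun y => 2*C₀ * |u₀ y|)
      ?_ ?_ ?_ ?_
    · simpa using this
    · filter_upwards with t
      exact (((continuous_const.mul (continuous_const.mul continuous_norm)).min
        continuous_const).aestronglyMeasurable).mul hu₀.abs.aestronglyMeasurable
    · filter_upwards [eventually_gt_atTop (0:ℝ)] with t ht
      filter_upwards with y
      have hc : (0:ℝ) < t ^ (-(1:ℝ)/(2*s)) := Real.rpow_pos_of_pos ht _
      rw [Real.norm_eq_abs, abs_mul, abs_of_nonneg (le_min (by positivity) (by positivity)),
        abs_abs]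
      exact mul_le_mul_of_nonneg_right (min_le_right _ _) (abs_nonneg _)
    · exact (hu₀.abs.const_mul _)
    · filter_upwards with y
      have : Tendsto (fun t : ℝ => L * (t ^ (-(1:ℝ)/(2*s)) * ‖y‖)) atTop (𝓝 0) := by
        simpa using ((h0.mul_const ‖y‖).const_mul L)
      have hmin : Tendsto (fun t : ℝ => min (L * (t ^ (-(1:ℝ)/(2*s)) * ‖y‖)) (2*C₀))
          atTop (𝓝 0) := by
        have := this.min (tendsto_const_nhds (x := 2*C₀))
        simpa [min_eq_left (by positivity : (0:ℝ) ≤ 2*C₀)] using this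
      simpa using hmin.mul_const |u₀ y|
  -- final squeeze
  apply tendsto_of_tendsto_of_tendsto_of_le_of_le' (g := fun _ : ℝ => (0:ENNReal))
    (h := fun t : ℝ => ENNReal.ofReal (D t)) tendsto_const_nhds
  · have := ENNReal.tendsto_ofReal (m := D) (a := 0) claim2
    simpa using this
  · filter_upwards with t
    exact zero_le
  · filter_upwards [eventually_gt_atTop (0:ℝ)] with t ht
    have hb : eLpNorm (fun x => fracSol n s u₀ x t - M * fracP n s x t) ⊤ volume ≤
        ENNReal.ofReal (t ^ (-(n:ℝ)/(2*s)) * D t) := by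
      rw [eLpNorm_exponent_top]
      apply eLpNormEssSup_le_of_ae_bound
      filter_upwards with x
      rw [Real.norm_eq_abs]
      exact claim1 t ht x
    calc ENNReal.ofReal (t ^ ((n:ℝ)/(2*s))) *
          eLpNorm (fun x => fracSol n s u₀ x t - M * fracP n s x t) ⊤ volume
        ≤ ENNReal.ofReal (t ^ ((n:ℝ)/(2*s))) * ENNReal.ofReal (t ^ (-(n:ℝ)/(2*s)) * D t) :=
          mul_le_mul_right hb _
      _ = ENNReal.ofReal (t ^ ((n:ℝ)/(2*s)) * (t ^ (-(n:ℝ)/(2*s)) * D t)) :=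
          (ENNReal.ofReal_mul (Real.rpow_nonneg ht.le _)).symm
      _ = ENNReal.ofReal (D t) := by
          rw [← mul_assoc, ← Real.rpow_add ht,
            show (n:ℝ)/(2*s) + -(n:ℝ)/(2*s) = 0 by ring, Real.rpow_zero, one_mul]
end

section
/- Let n ≥ 1, s ∈ (0,1), and fix h ≠ 0. Consider the solution u(x,t) = P(x + h e₁, t; s), i.e. the fractional heat kernel displaced by h in the first coordinate direction. Then the convergence rate of Theorem on solutions with finite first moment is attained exactly: there exist constants c, C, T > 0 (depending on n, s, h) such that for all t ≥ T, c·t^{−1/(2s)} ≤ t^{n/(2s)} ‖u(·,t) − P(·,t;s)‖_{L^∞(ℝⁿ)} ≤ C·t^{−1/(2s)}. -/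
open MeasureTheory Real Filter

namespace FracAux

lemma real_bound {p b : ℝ} (hp : 0 < p) (hb : 0 < b) (k N m : ℕ)
    (hm : ((N : ℝ) + k) ≤ p * m) {r : ℝ} (hr : 0 ≤ r) :
    (1 + r) ^ N * (r ^ k * rexp (-(b * r ^ p))) ≤
      2 ^ N * max 1 ((m.factorial : ℝ) / b ^ m) := by
  have hexp : rexp (-(b * r ^ p)) ≤ 1 := by
    rw [Real.exp_le_one_iff]
    have : 0 ≤ b * r ^ p := by positivity
    linarith
  rcases le_total r 1 with h1 | h1
  · have e1 : (1 + r) ^ N ≤ 2 ^ N := pow_le_pow_left₀ (by linarith) (by linarith) N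
    have e2 : r ^ k * rexp (-(b * r ^ p)) ≤ 1 :=
      mul_le_one₀ (pow_le_one₀ hr h1) (exp_nonneg _) hexp
    calc (1 + r) ^ N * (r ^ k * rexp (-(b * r ^ p))) ≤ 2 ^ N * 1 :=
          mul_le_mul e1 e2 (by positivity) (by positivity)
      _ ≤ 2 ^ N * max 1 ((m.factorial : ℝ) / b ^ m) := by
          gcongr; exact le_max_left _ _
  · have hr0 : 0 < r := lt_of_lt_of_le one_pos h1
    have e1 : (1 + r) ^ N ≤ (2 * r) ^ N := pow_le_pow_left₀ (by linarith) (by linarith) N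
    have hbr : 0 ≤ b * r ^ p := by positivity
    have h2 : (b * r ^ p) ^ m / (m.factorial : ℝ) ≤ rexp (b * r ^ p) :=
      Real.pow_div_factorial_le_exp _ hbr m
    have hfac : (0:ℝ) < m.factorial := by exact_mod_cast m.factorial_pos
    have hbrm : 0 < (b * r ^ p) ^ m := by positivity
    have h4 : rexp (-(b * r ^ p)) ≤ (m.factorial : ℝ) / (b * r ^ p) ^ m := by
      rw [Real.exp_neg]
      have hq : 0 < (b * r ^ p) ^ m / (m.factorial : ℝ) := by positivity
      calc (rexp (b * r ^ p))⁻¹ ≤ ((b * r ^ p) ^ m / (m.factorial : ℝ))⁻¹ :=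
            inv_anti₀ hq h2
        _ = (m.factorial : ℝ) / (b * r ^ p) ^ m := by rw [inv_div]
    have hpow : (r : ℝ) ^ (N + k) ≤ (r ^ p) ^ m := by
      have h5 : (r : ℝ) ^ (N + k) = r ^ (((N + k : ℕ) : ℝ)) := (Real.rpow_natCast _ _).symm
      have h6 : (r ^ p) ^ m = r ^ (p * m) := by
        rw [← Real.rpow_natCast (r ^ p) m, ← Real.rpow_mul hr]
      rw [h5, h6]
      apply Real.rpow_le_rpow_of_exponent_le h1
      push_cast
      exact hm
    have key : r ^ (N + k) * rexp (-(b * r ^ p)) ≤ (m.factorial : ℝ) / b ^ m := by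
      calc r ^ (N + k) * rexp (-(b * r ^ p))
          ≤ r ^ (N + k) * ((m.factorial : ℝ) / (b * r ^ p) ^ m) := by
            exact mul_le_mul_of_nonneg_left h4 (by positivity)
        _ ≤ (r ^ p) ^ m * ((m.factorial : ℝ) / (b * r ^ p) ^ m) := by
            exact mul_le_mul_of_nonneg_right hpow (by positivity)
        _ = (m.factorial : ℝ) / b ^ m := by
            have hrp : (0:ℝ) < (r ^ p) ^ m := by positivity
            rw [mul_pow]
            field_simp
    calc (1 + r) ^ N * (r ^ k * rexp (-(b * r ^ p)))
        ≤ (2 * r) ^ N * (r ^ k * rexp (-(b * r ^ p))) :=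
          mul_le_mul_of_nonneg_right e1 (by positivity)
      _ = 2 ^ N * (r ^ (N + k) * rexp (-(b * r ^ p))) := by
          rw [mul_pow, pow_add]; ring
      _ ≤ 2 ^ N * ((m.factorial : ℝ) / b ^ m) :=
          mul_le_mul_of_nonneg_left key (by positivity)
      _ ≤ 2 ^ N * max 1 ((m.factorial : ℝ) / b ^ m) := by
          gcongr; exact le_max_right _ _

lemma integrable_pow_mul_exp (n : ℕ) {p b : ℝ} (hp : 0 < p) (hb : 0 < b) (k : ℕ) :
    Integrable (fun ξ : EuclideanSpace ℝ (Fin n) => ‖ξ‖ ^ k * rexp (-(b * ‖ξ‖ ^ p))) := by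
  obtain ⟨m, hm⟩ : ∃ m : ℕ, (((n + 1 : ℕ) : ℝ) + k) ≤ p * m := by
    obtain ⟨m, hm⟩ := exists_nat_ge ((((n + 1 : ℕ) : ℝ) + k) / p)
    exact ⟨m, by rw [div_le_iff₀ hp] at hm; linarith⟩
  set C : ℝ := 2 ^ (n + 1) * max 1 ((m.factorial : ℝ) / b ^ m) with hCdef
  have hint : Integrable (fun ξ : EuclideanSpace ℝ (Fin n) =>
      C * (1 + ‖ξ‖) ^ (-((n : ℝ) + 1))) := by
    refine (integrable_one_add_norm ?_).const_mul C
    rw [finrank_euclideanSpace_fin]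
    linarith
  refine hint.mono' ?_ ?_
  · apply Continuous.aestronglyMeasurable
    apply ((continuous_norm.pow k)).mul
    exact Real.continuous_exp.comp
      ((continuous_const.mul (continuous_norm.rpow_const (fun x => Or.inr hp.le))).neg)
  · refine Eventually.of_forall fun x => ?_
    have hx : (0:ℝ) ≤ ‖x‖ := norm_nonneg x
    have h1 : (0:ℝ) < 1 + ‖x‖ := by linarith
    have hrw : (1 + ‖x‖) ^ (-((n : ℝ) + 1)) = ((1 + ‖x‖) ^ (n + 1 : ℕ))⁻¹ := by
      rw [← Real.rpow_natCast (1 + ‖x‖) (n + 1), ← Real.rpow_neg h1.le]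
      norm_num
    rw [Real.norm_eq_abs, abs_of_nonneg (by positivity), hrw, mul_comm C, inv_mul_eq_div,
      le_div_iff₀ (by positivity), mul_comm]
    have := real_bound hp hb k (n + 1) m (by push_cast at hm ⊢; linarith) hx
    calc (1 + ‖x‖) ^ (n + 1) * (‖x‖ ^ k * rexp (-(b * ‖x‖ ^ p)))
        ≤ 2 ^ (n + 1) * max 1 ((m.factorial : ℝ) / b ^ m) := this
      _ = C := hCdef.symm

lemma norm_integrand {n : ℕ} (s t : ℝ) (x ξ : EuclideanSpace ℝ (Fin n)) :
    ‖Complex.exp (Complex.I * ((inner ℝ x ξ : ℝ) : ℂ)) *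
      Complex.exp (-(t : ℂ) * ((‖ξ‖ ^ (2 * s) : ℝ) : ℂ))‖ = rexp (-(t * ‖ξ‖ ^ (2 * s))) := by
  rw [norm_mul, Complex.norm_exp, Complex.norm_exp]
  simp [Complex.mul_re]

lemma integrable_integrand (n : ℕ) {s : ℝ} (hs : 0 < s) {t : ℝ} (ht : 0 < t)
    (x : EuclideanSpace ℝ (Fin n)) :
    Integrable (fun ξ : EuclideanSpace ℝ (Fin n) =>
      Complex.exp (Complex.I * ((inner ℝ x ξ : ℝ) : ℂ)) *
        Complex.exp (-(t : ℂ) * ((‖ξ‖ ^ (2 * s) : ℝ) : ℂ))) := by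
  have h0 := integrable_pow_mul_exp n (show (0:ℝ) < 2*s by linarith) ht 0
  simp only [pow_zero, one_mul] at h0
  refine h0.mono' ?_ ?_
  · apply Continuous.aestronglyMeasurable
    apply Continuous.mul
    · exact Complex.continuous_exp.comp
        (continuous_const.mul (Complex.continuous_ofReal.comp
          (Continuous.inner continuous_const continuous_id)))
    · exact Complex.continuous_exp.comp
        (continuous_const.mul (Complex.continuous_ofReal.comp
          (continuous_norm.rpow_const (fun x => Or.inr (by linarith)))))
  · exact Eventually.of_forall fun ξ => le_of_eq (norm_integrand s t x ξ)

lemma fracP_scaling (n : ℕ) {s : ℝ} (hs : 0 < s) {t : ℝ} (ht : 0 < t)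
    (x : EuclideanSpace ℝ (Fin n)) :
    fracP n s x t = t ^ (-(n : ℝ) / (2 * s)) * fracP n s (t ^ (-1 / (2 * s)) • x) 1 := by
  have hs2 : (2 * s) ≠ 0 := by positivity
  set R : ℝ := t ^ (-1 / (2 * s)) with hRdef
  have hR : 0 < R := Real.rpow_pos_of_pos ht _
  set f : EuclideanSpace ℝ (Fin n) → ℂ := fun ξ =>
    Complex.exp (Complex.I * ((inner ℝ x ξ : ℝ) : ℂ)) *
      Complex.exp (-(t : ℂ) * ((‖ξ‖ ^ (2 * s) : ℝ) : ℂ)) with hfdef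
  have key : ∀ η : EuclideanSpace ℝ (Fin n), f (R • η) =
      Complex.exp (Complex.I * ((inner ℝ (R • x) η : ℝ) : ℂ)) *
        Complex.exp (-((1:ℝ) : ℂ) * ((‖η‖ ^ (2 * s) : ℝ) : ℂ)) := by
    intro η
    have h1 : (inner ℝ x (R • η) : ℝ) = (inner ℝ (R • x) η : ℝ) := by
      rw [real_inner_smul_right, real_inner_smul_left]
    have h2 : ‖R • η‖ ^ (2 * s) = R ^ (2 * s) * ‖η‖ ^ (2 * s) := by
      rw [norm_smul, Real.norm_eq_abs, abs_of_pos hR, Real.mul_rpow hR.le (norm_nonneg _)]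
    have h3 : R ^ (2 * s) = t⁻¹ := by
      rw [hRdef, ← Real.rpow_mul ht.le]
      rw [show -1 / (2 * s) * (2 * s) = -1 by field_simp]
      exact Real.rpow_neg_one t
    have h4 : -(t : ℂ) * ((‖R • η‖ ^ (2 * s) : ℝ) : ℂ) =
        -((1:ℝ) : ℂ) * ((‖η‖ ^ (2 * s) : ℝ) : ℂ) := by
      rw [h2, h3]
      push_cast
      have htC : (t : ℂ) ≠ 0 := by exact_mod_cast ht.ne'
      field_simp
    rw [hfdef]
    simp only []
    rw [h1, h4]
  have hfin : Module.finrank ℝ (EuclideanSpace ℝ (Fin n)) = n := finrank_euclideanSpace_fin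
  have hcv := MeasureTheory.Measure.integral_comp_smul volume f R
  rw [hfin] at hcv
  have habs : |((R ^ n)⁻¹ : ℝ)| = (R ^ n)⁻¹ := abs_of_pos (by positivity)
  rw [habs] at hcv
  have hint : ∫ η, f (R • η) = ∫ η, Complex.exp (Complex.I * ((inner ℝ (R • x) η : ℝ) : ℂ)) *
      Complex.exp (-((1:ℝ) : ℂ) * ((‖η‖ ^ (2 * s) : ℝ) : ℂ)) := by
    exact integral_congr_ae (Eventually.of_forall fun η => key η)
  rw [hint] at hcv
  -- hcv : ∫ g = (R^n)⁻¹ • ∫ f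
  have hRn : (R : ℝ) ^ n = t ^ (-(n : ℝ) / (2 * s)) := by
    rw [hRdef, ← Real.rpow_natCast (t ^ (-1 / (2 * s))) n, ← Real.rpow_mul ht.le]
    congr 1
    ring
  have hIf : (∫ ξ, f ξ) = (R ^ n : ℝ) • ∫ η,
      Complex.exp (Complex.I * ((inner ℝ (R • x) η : ℝ) : ℂ)) *
        Complex.exp (-((1:ℝ) : ℂ) * ((‖η‖ ^ (2 * s) : ℝ) : ℂ)) := by
    rw [hcv, smul_smul]
    rw [mul_inv_cancel₀ (by positivity : (R:ℝ)^n ≠ 0), one_smul]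
  show ((2 * π) ^ n)⁻¹ * (∫ ξ, f ξ).re = _
  rw [hIf, Complex.real_smul, Complex.re_ofReal_mul, hRn]
  unfold fracP
  push_cast
  ring

lemma continuous_fracP_one (n : ℕ) {s : ℝ} (hs : 0 < s) :
    Continuous fun x : EuclideanSpace ℝ (Fin n) => fracP n s x 1 := by
  apply Continuous.mul continuous_const
  apply Complex.continuous_re.comp
  apply MeasureTheory.continuous_of_dominated (bound := fun ξ => rexp (-(1 * ‖ξ‖ ^ (2 * s))))
  · intro x
    exact (integrable_integrand n hs one_pos x).aestronglyMeasurable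
  · intro x
    exact Eventually.of_forall fun ξ => le_of_eq (norm_integrand s 1 x ξ)
  · exact integrable_pow_mul_exp n (by linarith : (0:ℝ) < 2*s) one_pos 0 |>.congr
      (Eventually.of_forall fun ξ => by simp)
  · refine Eventually.of_forall fun ξ => ?_
    apply Continuous.mul
    · exact Complex.continuous_exp.comp
        (continuous_const.mul (Complex.continuous_ofReal.comp
          (Continuous.inner continuous_id continuous_const)))
    · exact continuous_const
  
lemma tendsto_fracP_one (n : ℕ) {s : ℝ} (hs : 0 < s) :
    Tendsto (fun x : EuclideanSpace ℝ (Fin n) => fracP n s x 1)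
      (cocompact (EuclideanSpace ℝ (Fin n))) (nhds 0) := by
  set g : EuclideanSpace ℝ (Fin n) → ℂ := fun ξ =>
    Complex.exp (-((1:ℝ) : ℂ) * ((‖ξ‖ ^ (2 * s) : ℝ) : ℂ)) with hgdef
  have hRL := tendsto_integral_exp_inner_smul_cocompact (V := EuclideanSpace ℝ (Fin n)) g
  set c : ℝ := -(2 * π)⁻¹ with hcdef
  have hc : c ≠ 0 := by
    simp [hcdef]
  have hcc : Tendsto (fun x : EuclideanSpace ℝ (Fin n) => c • x)
      (cocompact _) (cocompact _) :=
    le_of_eq (Homeomorph.smulOfNeZero c hc).map_cocompact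
  have hcomp := hRL.comp hcc
  have heq : ∀ x : EuclideanSpace ℝ (Fin n),
      (∫ v, Real.fourierChar (-(inner ℝ v (c • x) : ℝ)) • g v) =
      ∫ ξ, Complex.exp (Complex.I * ((inner ℝ x ξ : ℝ) : ℂ)) *
        Complex.exp (-((1:ℝ) : ℂ) * ((‖ξ‖ ^ (2 * s) : ℝ) : ℂ)) := by
    intro x
    apply integral_congr_ae
    refine Eventually.of_forall fun ξ => ?_
    dsimp only
    rw [Circle.smul_def, Real.fourierChar_apply]
    congr 1
    rw [real_inner_smul_right]
    have : 2 * π * -(c * (inner ℝ ξ x : ℝ)) = (inner ℝ ξ x : ℝ) := by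
      rw [hcdef]
      field_simp
    rw [this, real_inner_comm]
    ring
  have h2 : Tendsto (fun x : EuclideanSpace ℝ (Fin n) =>
      ∫ ξ, Complex.exp (Complex.I * ((inner ℝ x ξ : ℝ) : ℂ)) *
        Complex.exp (-((1:ℝ) : ℂ) * ((‖ξ‖ ^ (2 * s) : ℝ) : ℂ))) (cocompact _) (nhds 0) := by
    refine hcomp.congr fun x => heq x
  have h3 := (Complex.continuous_re.tendsto 0).comp h2
  have h4 := h3.const_mul (((2 * π) ^ n)⁻¹ : ℝ)
  simpa [fracP] using h4

lemma fracP_zero_pos (n : ℕ) {s : ℝ} (hs : 0 < s) :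
    0 < fracP n s 0 1 := by
  have hint : Integrable (fun ξ : EuclideanSpace ℝ (Fin n) => rexp (-(1 * ‖ξ‖ ^ (2 * s)))) := by
    simpa using integrable_pow_mul_exp n (by linarith : (0:ℝ) < 2*s) one_pos 0
  have heq : fracP n s 0 1 = ((2 * π) ^ n)⁻¹ *
      ∫ ξ : EuclideanSpace ℝ (Fin n), rexp (-(1 * ‖ξ‖ ^ (2 * s))) := by
    unfold fracP
    congr 1
    have : ∀ ξ : EuclideanSpace ℝ (Fin n),
        Complex.exp (Complex.I * ((inner ℝ (0 : EuclideanSpace ℝ (Fin n)) ξ : ℝ) : ℂ)) *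
          Complex.exp (-((1:ℝ) : ℂ) * ((‖ξ‖ ^ (2 * s) : ℝ) : ℂ)) =
        ((rexp (-(1 * ‖ξ‖ ^ (2 * s))) : ℝ) : ℂ) := by
      intro ξ
      rw [inner_zero_left]
      push_cast
      rw [← Complex.exp_add]
      congr 1
      ring
    have hIof : (∫ ξ : EuclideanSpace ℝ (Fin n), ((rexp (-(1 * ‖ξ‖ ^ (2 * s))) : ℝ) : ℂ)) =
        ((∫ ξ : EuclideanSpace ℝ (Fin n), rexp (-(1 * ‖ξ‖ ^ (2 * s))) : ℝ) : ℂ) :=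
      integral_ofReal
    rw [integral_congr_ae (Eventually.of_forall this), hIof, Complex.ofReal_re]
  rw [heq]
  apply mul_pos (by positivity)
  rw [integral_pos_iff_support_of_nonneg (fun ξ => (exp_nonneg _)) hint]
  have : Function.support (fun ξ : EuclideanSpace ℝ (Fin n) => rexp (-(1 * ‖ξ‖ ^ (2 * s)))) =
      Set.univ := by
    ext ξ; simp [Function.support, (exp_pos _).ne']
  rw [this]
  exact IsOpen.measure_pos volume isOpen_univ ⟨0, trivial⟩

lemma exp_I_sub_le (a b : ℝ) :
    ‖Complex.exp (Complex.I * a) - Complex.exp (Complex.I * b)‖ ≤ |a - b| := by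
  have hder : ∀ u : ℝ, HasDerivAt (fun u : ℝ => Complex.exp (Complex.I * u))
      (Complex.exp (Complex.I * u) * Complex.I) u := by
    intro u
    have h1 : HasDerivAt (fun u : ℝ => ((u : ℝ) : ℂ)) 1 u := by
      simpa using (hasDerivAt_id u).ofReal_comp
    have h2 := (h1.const_mul Complex.I).cexp
    simpa using h2
  have := Convex.norm_image_sub_le_of_norm_hasDerivWithin_le (𝕜 := ℝ)
    (f := fun u : ℝ => Complex.exp (Complex.I * u))
    (f' := fun u : ℝ => Complex.exp (Complex.I * u) * Complex.I)
    (s := Set.univ) (C := 1)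
    (fun u _ => (hder u).hasDerivWithinAt)
    (fun u _ => by
      rw [norm_mul, Complex.norm_exp, Complex.norm_I]
      simp [Complex.mul_re])
    convex_univ (Set.mem_univ b) (Set.mem_univ a)
  simpa [Real.norm_eq_abs] using this

lemma fracP_lip (n : ℕ) {s : ℝ} (hs : 0 < s) :
    ∃ L : ℝ, 0 ≤ L ∧ ∀ x y : EuclideanSpace ℝ (Fin n),
      |fracP n s x 1 - fracP n s y 1| ≤ L * ‖x - y‖ := by
  set L : ℝ := ((2 * π) ^ n)⁻¹ *
    ∫ ξ : EuclideanSpace ℝ (Fin n), ‖ξ‖ * rexp (-(1 * ‖ξ‖ ^ (2 * s))) with hLdef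
  have hintL : Integrable (fun ξ : EuclideanSpace ℝ (Fin n) =>
      ‖ξ‖ * rexp (-(1 * ‖ξ‖ ^ (2 * s)))) := by
    simpa using integrable_pow_mul_exp n (by linarith : (0:ℝ) < 2*s) one_pos 1
  have hL0 : 0 ≤ L := by
    apply mul_nonneg (by positivity)
    exact integral_nonneg fun ξ => by positivity
  refine ⟨L, hL0, fun x y => ?_⟩
  have hx := integrable_integrand n hs one_pos x
  have hy := integrable_integrand n hs one_pos y
  unfold fracP
  rw [← mul_sub, abs_mul, abs_of_nonneg (by positivity : (0:ℝ) ≤ ((2*π)^n)⁻¹)]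
  rw [← Complex.sub_re, ← integral_sub hx hy]
  have step1 : |(∫ ξ : EuclideanSpace ℝ (Fin n),
      (Complex.exp (Complex.I * ((inner ℝ x ξ : ℝ) : ℂ)) *
        Complex.exp (-((1:ℝ) : ℂ) * ((‖ξ‖ ^ (2 * s) : ℝ) : ℂ)) -
      Complex.exp (Complex.I * ((inner ℝ y ξ : ℝ) : ℂ)) *
        Complex.exp (-((1:ℝ) : ℂ) * ((‖ξ‖ ^ (2 * s) : ℝ) : ℂ)))).re| ≤
      ∫ ξ : EuclideanSpace ℝ (Fin n), ‖x - y‖ * (‖ξ‖ * rexp (-(1 * ‖ξ‖ ^ (2 * s)))) := by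
    refine le_trans (Complex.abs_re_le_norm _) ?_
    refine le_trans (norm_integral_le_integral_norm _) ?_
    apply integral_mono_of_nonneg
    · exact Eventually.of_forall fun ξ => norm_nonneg _
    · exact hintL.const_mul _
    refine Eventually.of_forall fun ξ => ?_
    have hfac : Complex.exp (Complex.I * ((inner ℝ x ξ : ℝ) : ℂ)) *
        Complex.exp (-((1:ℝ) : ℂ) * ((‖ξ‖ ^ (2 * s) : ℝ) : ℂ)) -
      Complex.exp (Complex.I * ((inner ℝ y ξ : ℝ) : ℂ)) *
        Complex.exp (-((1:ℝ) : ℂ) * ((‖ξ‖ ^ (2 * s) : ℝ) : ℂ)) =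
      (Complex.exp (Complex.I * ((inner ℝ x ξ : ℝ) : ℂ)) -
        Complex.exp (Complex.I * ((inner ℝ y ξ : ℝ) : ℂ))) *
        Complex.exp (-((1:ℝ) : ℂ) * ((‖ξ‖ ^ (2 * s) : ℝ) : ℂ)) := by ring
    dsimp only
    rw [hfac, norm_mul]
    have h1 : ‖Complex.exp (Complex.I * ((inner ℝ x ξ : ℝ) : ℂ)) -
        Complex.exp (Complex.I * ((inner ℝ y ξ : ℝ) : ℂ))‖ ≤ ‖x - y‖ * ‖ξ‖ := by
      refine le_trans (exp_I_sub_le _ _) ?_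
      have : (inner ℝ x ξ : ℝ) - (inner ℝ y ξ : ℝ) = (inner ℝ (x - y) ξ : ℝ) := by
        rw [inner_sub_left]
      rw [this]
      exact abs_real_inner_le_norm _ _
    have h2 : ‖Complex.exp (-((1:ℝ) : ℂ) * ((‖ξ‖ ^ (2 * s) : ℝ) : ℂ))‖ =
        rexp (-(1 * ‖ξ‖ ^ (2 * s))) := by
      rw [Complex.norm_exp]
      congr 1
      simp
    rw [h2]
    calc ‖Complex.exp (Complex.I * ((inner ℝ x ξ : ℝ) : ℂ)) -
          Complex.exp (Complex.I * ((inner ℝ y ξ : ℝ) : ℂ))‖ * rexp (-(1 * ‖ξ‖ ^ (2 * s)))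
        ≤ (‖x - y‖ * ‖ξ‖) * rexp (-(1 * ‖ξ‖ ^ (2 * s))) :=
          mul_le_mul_of_nonneg_right h1 (exp_nonneg _)
      _ = ‖x - y‖ * (‖ξ‖ * rexp (-(1 * ‖ξ‖ ^ (2 * s)))) := by ring
  refine le_trans (mul_le_mul_of_nonneg_left step1 (by positivity)) (le_of_eq ?_)
  rw [integral_const_mul, hLdef]
  ring

lemma point_le_eLpNorm {n : ℕ} {f : EuclideanSpace ℝ (Fin n) → ℝ} (hf : Continuous f)
    (x₀ : EuclideanSpace ℝ (Fin n)) :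
    ENNReal.ofReal |f x₀| ≤ eLpNorm f ⊤ volume := by
  rw [eLpNorm_exponent_top]
  by_contra hlt
  push_neg at hlt
  obtain ⟨r, hr0, h1, h2⟩ := ENNReal.lt_iff_exists_real_btwn.mp hlt
  have hrx : r < |f x₀| := by
    rwa [ENNReal.ofReal_lt_ofReal_iff_of_nonneg hr0] at h2
  set U : Set (EuclideanSpace ℝ (Fin n)) := {x | r < |f x|} with hU
  have hUopen : IsOpen U := isOpen_lt continuous_const hf.abs
  have hmem : x₀ ∈ U := hrx
  have hpos : 0 < volume U := hUopen.measure_pos volume ⟨x₀, hmem⟩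
  have hae : ∀ᵐ y : EuclideanSpace ℝ (Fin n), y ∉ U := by
    filter_upwards [MeasureTheory.ae_le_eLpNormEssSup (f := f) (μ := volume)] with y hy
    intro hyU
    have h3 : ‖f y‖ₑ < ENNReal.ofReal r := lt_of_le_of_lt hy h1
    rw [← ofReal_norm, Real.norm_eq_abs] at h3
    have h4 : |f y| < r := by
      by_contra hcon
      push_neg at hcon
      exact absurd (ENNReal.ofReal_le_ofReal hcon) (not_le.mpr h3)
    exact absurd hyU (not_lt.mpr h4.le)
  have hzero : volume U = 0 := by
    rw [← MeasureTheory.measure_eq_zero_iff_ae_notMem]  at hae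
    exact hae
  exact absurd hzero hpos.ne'

lemma eLpNorm_comp_smul {n : ℕ} (g : EuclideanSpace ℝ (Fin n) → ℝ) {R : ℝ} (hR : R ≠ 0) :
    eLpNorm (fun x => g (R • x)) ⊤ (volume : Measure (EuclideanSpace ℝ (Fin n)))
      = eLpNorm g ⊤ volume := by
  have hemb : MeasurableEmbedding (fun x : EuclideanSpace ℝ (Fin n) => R • x) :=
    (Homeomorph.smulOfNeZero R hR).measurableEmbedding
  rw [eLpNorm_exponent_top, eLpNorm_exponent_top, eLpNormEssSup, eLpNormEssSup]
  have hmap := hemb.essSup_map_measure (μ := volume)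
    (g := fun x : EuclideanSpace ℝ (Fin n) => (‖g x‖₊ : ENNReal))
  rw [MeasureTheory.Measure.map_addHaar_smul volume hR] at hmap
  rw [essSup_ennreal_smul_measure ?_ _] at hmap
  · exact hmap.symm
  · rw [finrank_euclideanSpace_fin]
    simp only [ne_eq, ENNReal.ofReal_eq_zero, not_le, abs_pos]
    positivity

end FracAux

open FracAux in
set_option maxHeartbeats 1000000 in
theorem fracHeat_displaced_kernel_optimal_rate
    (n : ℕ) (hn : 1 ≤ n) (s : ℝ) (hs : s ∈ Set.Ioo (0:ℝ) 1) (h : ℝ) (hh : h ≠ 0) :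
    ∃ c > (0:ℝ), ∃ C > (0:ℝ), ∃ T > (0:ℝ), ∀ t ≥ T,
      ENNReal.ofReal (c * t ^ (-1 / (2 * s))) ≤
        ENNReal.ofReal (t ^ ((n : ℝ) / (2 * s))) *
          eLpNorm (fun x =>
            fracP n s (x + h • EuclideanSpace.single (⟨0, hn⟩ : Fin n) (1:ℝ)) t
              - fracP n s x t) ⊤ volume ∧
      ENNReal.ofReal (t ^ ((n : ℝ) / (2 * s))) *
          eLpNorm (fun x =>
            fracP n s (x + h • EuclideanSpace.single (⟨0, hn⟩ : Fin n) (1:ℝ)) t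
              - fracP n s x t) ⊤ volume ≤
        ENNReal.ofReal (C * t ^ (-1 / (2 * s))) := by
  obtain ⟨hs0, hs1⟩ := hs
  have hs2 : (2 * s) ≠ 0 := by positivity
  set e₁ : EuclideanSpace ℝ (Fin n) := EuclideanSpace.single (⟨0, hn⟩ : Fin n) (1:ℝ)
    with he₁def
  have he₁ : ‖e₁‖ = 1 := by rw [he₁def, EuclideanSpace.norm_single]; norm_num
  set Φ : EuclideanSpace ℝ (Fin n) → ℝ := fun x => fracP n s x 1 with hΦdef
  have hΦc : Continuous Φ := continuous_fracP_one n hs0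
  have hκ : 0 < Φ 0 := fracP_zero_pos n hs0
  set κ : ℝ := Φ 0 with hκdef
  obtain ⟨L, hL0, hLip⟩ := fracP_lip n hs0
  -- decay radius
  have hev : {x : EuclideanSpace ℝ (Fin n) | |Φ x| < κ/2} ∈
      cocompact (EuclideanSpace ℝ (Fin n)) := by
    have := Metric.tendsto_nhds.mp (tendsto_fracP_one n hs0) (κ/2) (by positivity)
    filter_upwards [this] with x hx
    simpa [Real.dist_eq] using hx
  obtain ⟨K, hKcomp, hKsub⟩ := mem_cocompact.mp hev
  obtain ⟨r0, hr0⟩ := hKcomp.isBounded.subset_closedBall 0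
  set Rad : ℝ := max r0 0 with hRaddef
  have hRad0 : 0 ≤ Rad := le_max_right _ _
  have hRad : ∀ y : EuclideanSpace ℝ (Fin n), Rad < ‖y‖ → |Φ y| < κ/2 := by
    intro y hy
    have : y ∉ K := by
      intro hyK
      have := hr0 hyK
      rw [Metric.mem_closedBall, dist_zero_right] at this
      have : ‖y‖ ≤ Rad := le_trans this (le_max_left _ _)
      linarith
    exact hKsub this
  -- constants
  refine ⟨κ / (2*(Rad+2)) * |h|, by positivity, (L+1) * |h|, by positivity,
    (|h|+1) ^ (2*s), rpow_pos_of_pos (by positivity) _, fun t ht => ?_⟩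
  have ht0 : 0 < t := lt_of_lt_of_le (rpow_pos_of_pos (by positivity) _) ht
  set R : ℝ := t ^ (-1 / (2 * s)) with hRdef
  have hR : 0 < R := rpow_pos_of_pos ht0 _
  have hRle : R ≤ (|h|+1)⁻¹ := by
    have h1 : t ^ (-1 / (2*s)) ≤ ((|h|+1) ^ (2*s)) ^ (-1 / (2*s)) := by
      apply Real.rpow_le_rpow_of_nonpos (rpow_pos_of_pos (by positivity) _) ht
      apply div_nonpos_of_nonpos_of_nonneg (by norm_num) (by positivity)
    have h2 : ((|h|+1) ^ (2*s)) ^ (-1 / (2*s)) = (|h|+1)⁻¹ := by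
      rw [← Real.rpow_mul (by positivity), show (2*s) * (-1 / (2*s)) = -1 by field_simp,
        Real.rpow_neg_one]
    rw [hRdef]; rw [h2] at h1; exact h1
  set a : ℝ := R * h with hadef
  have ha : a ≠ 0 := mul_ne_zero hR.ne' hh
  have haabs : |a| = R * |h| := by rw [hadef, abs_mul, abs_of_pos hR]
  have ha0 : 0 < |a| := abs_pos.mpr ha
  have ha1 : |a| ≤ 1 := by
    rw [haabs]
    calc R * |h| ≤ (|h|+1)⁻¹ * |h| := by
          apply mul_le_mul_of_nonneg_right hRle (abs_nonneg h)
      _ ≤ 1 := by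
          rw [inv_mul_le_iff₀ (by positivity)]
          linarith [abs_nonneg h]
  -- pointwise scaling identity
  have hpt : ∀ x : EuclideanSpace ℝ (Fin n), fracP n s (x + h • e₁) t - fracP n s x t =
      t ^ (-(n : ℝ) / (2 * s)) * ((fun y => Φ (y + a • e₁) - Φ y) (R • x)) := by
    intro x
    rw [fracP_scaling n hs0 ht0 (x + h • e₁), fracP_scaling n hs0 ht0 x]
    have hsm : t ^ (-1 / (2*s)) • (x + h • e₁) = R • x + a • e₁ := by
      rw [← hRdef, smul_add, smul_smul, hadef]
    rw [hsm]
    show _ = t ^ (-(n : ℝ) / (2 * s)) * (Φ (R • x + a • e₁) - Φ (R • x))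
    rw [hΦdef, ← hRdef]
    ring
  -- the eLpNorm identity
  have hΔc : Continuous (fun y : EuclideanSpace ℝ (Fin n) => Φ (y + a • e₁) - Φ y) :=
    (hΦc.comp (continuous_id.add continuous_const)).sub hΦc
  have hfun : (fun x : EuclideanSpace ℝ (Fin n) =>
      fracP n s (x + h • e₁) t - fracP n s x t) =
      (t ^ (-(n : ℝ) / (2 * s))) •
        (fun x => (fun y => Φ (y + a • e₁) - Φ y) (R • x)) := by
    funext x
    exact hpt x
  have hel1 : eLpNorm (fun x : EuclideanSpace ℝ (Fin n) =>
        fracP n s (x + h • e₁) t - fracP n s x t) ⊤ volume =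
      ENNReal.ofReal (t ^ (-(n : ℝ) / (2 * s))) *
        eLpNorm (fun y : EuclideanSpace ℝ (Fin n) => Φ (y + a • e₁) - Φ y) ⊤ volume := by
    rw [hfun, eLpNorm_const_smul,
      eLpNorm_comp_smul (fun y => Φ (y + a • e₁) - Φ y) hR.ne']
    congr 1
    rw [← ofReal_norm, Real.norm_eq_abs,
      abs_of_pos (rpow_pos_of_pos ht0 _)]
  have hQ : ENNReal.ofReal (t ^ ((n : ℝ) / (2 * s))) *
      eLpNorm (fun x : EuclideanSpace ℝ (Fin n) =>
        fracP n s (x + h • e₁) t - fracP n s x t) ⊤ volume =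
      eLpNorm (fun y : EuclideanSpace ℝ (Fin n) => Φ (y + a • e₁) - Φ y) ⊤ volume := by
    rw [hel1, ← mul_assoc, ← ENNReal.ofReal_mul (rpow_nonneg ht0.le _),
      ← Real.rpow_add ht0,
      show (n : ℝ) / (2*s) + (-(n : ℝ) / (2*s)) = 0 by ring,
      Real.rpow_zero, ENNReal.ofReal_one, one_mul]
  rw [hQ]
  constructor
  · -- lower bound
    set N : ℕ := ⌈Rad / |a|⌉₊ + 1 with hNdef
    have hNpos : 0 < N := Nat.succ_pos _
    have hNR : (0:ℝ) < N := by exact_mod_cast hNpos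
    have hNa_big : Rad < (N : ℝ) * |a| := by
      have h1 : Rad / |a| ≤ (⌈Rad / |a|⌉₊ : ℝ) := Nat.le_ceil _
      have h2 : Rad ≤ (⌈Rad / |a|⌉₊ : ℝ) * |a| := by
        rw [← div_le_iff₀ ha0]; exact h1
      have : (N : ℝ) * |a| = (⌈Rad / |a|⌉₊ : ℝ) * |a| + |a| := by
        rw [hNdef]; push_cast; ring
      linarith
    have hNa_small : (N : ℝ) * |a| ≤ Rad + 2 := by
      have h1 : (⌈Rad / |a|⌉₊ : ℝ) < Rad / |a| + 1 :=
        Nat.ceil_lt_add_one (by positivity)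
      have h2 : (N : ℝ) < Rad / |a| + 2 := by
        rw [hNdef]; push_cast; linarith
      have h3 : (N : ℝ) * |a| < (Rad / |a| + 2) * |a| :=
        (mul_lt_mul_of_pos_right h2 ha0)
      have h4 : (Rad / |a| + 2) * |a| = Rad + 2 * |a| := by
        field_simp
      nlinarith
    have claim : ∃ k : ℕ, κ / (2*N) ≤
        |(fun y => Φ (y + a • e₁) - Φ y) ((((k:ℝ) * a)) • e₁)| := by
      by_contra hcon
      push_neg at hcon
      set G : ℕ → ℝ := fun k => Φ ((((k:ℝ)) * a) • e₁) with hGdef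
      have hstep : ∀ k : ℕ, G (k+1) - G k =
          (fun y => Φ (y + a • e₁) - Φ y) ((((k:ℝ) * a)) • e₁) := by
        intro k
        have : (((k:ℝ) + 1) * a) • e₁ = (((k:ℝ) * a)) • e₁ + a • e₁ := by
          rw [← add_smul]; ring_nf
        rw [hGdef]
        simp only []
        push_cast
        rw [this]
      have hsum : ∑ k ∈ Finset.range N, (G (k+1) - G k) = G N - G 0 :=
        Finset.sum_range_sub G N
      have hG0 : G 0 = κ := by
        rw [hGdef]
        norm_num [hκdef]
      have hGN : |G N| < κ/2 := by
        apply hRad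
        rw [norm_smul, Real.norm_eq_abs, abs_mul, Nat.abs_cast, he₁, mul_one]
        exact hNa_big
      have hlow : κ/2 ≤ |G N - G 0| := by
        rw [hG0, abs_sub_comm]
        have : κ - |G N| ≤ |κ - G N| := by
          have := abs_sub_abs_le_abs_sub κ (G N)
          have hκa : |κ| = κ := abs_of_pos hκ
          linarith
        linarith
      have hup : |G N - G 0| < κ/2 := by
        rw [← hsum]
        calc |∑ k ∈ Finset.range N, (G (k+1) - G k)| ≤
            ∑ k ∈ Finset.range N, |G (k+1) - G k| :=
              Finset.abs_sum_le_sum_abs _ _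
          _ < ∑ _k ∈ Finset.range N, (κ / (2*N)) := by
              apply Finset.sum_lt_sum_of_nonempty ⟨0, Finset.mem_range.mpr hNpos⟩
              intro k _
              rw [hstep k]
              exact hcon k
          _ = κ/2 := by
              rw [Finset.sum_const, Finset.card_range, nsmul_eq_mul]
              field_simp
      linarith
    obtain ⟨k, hk⟩ := claim
    calc ENNReal.ofReal (κ / (2*(Rad+2)) * |h| * t ^ (-1 / (2 * s)))
        ≤ ENNReal.ofReal (κ / (2*N)) := by
          apply ENNReal.ofReal_le_ofReal
          rw [← hRdef]
          have hca : κ / (2*(Rad+2)) * |h| * R = κ * |a| / (2*(Rad+2)) := by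
            rw [haabs]; ring
          rw [hca, div_le_div_iff₀ (by positivity) (by positivity)]
          nlinarith [hκ.le, ha0.le, hNa_small, hRad0]
      _ ≤ ENNReal.ofReal |(fun y => Φ (y + a • e₁) - Φ y) ((((k:ℝ) * a)) • e₁)| :=
          ENNReal.ofReal_le_ofReal hk
      _ ≤ eLpNorm (fun y : EuclideanSpace ℝ (Fin n) => Φ (y + a • e₁) - Φ y) ⊤ volume :=
          point_le_eLpNorm hΔc _
  · -- upper bound
    rw [eLpNorm_exponent_top]
    apply eLpNormEssSup_le_of_ae_bound (C := (L+1) * |h| * t ^ (-1 / (2 * s)))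
    refine Eventually.of_forall fun y => ?_
    rw [Real.norm_eq_abs]
    have hb := hLip (y + a • e₁) y
    have hsub : (y + a • e₁) - y = a • e₁ := by abel
    rw [hsub, norm_smul, Real.norm_eq_abs, he₁, mul_one] at hb
    calc |Φ (y + a • e₁) - Φ y| ≤ L * |a| := hb
      _ ≤ (L+1) * |h| * t ^ (-1 / (2 * s)) := by
          rw [haabs, ← hRdef]
          nlinarith [hR.le, abs_nonneg h, hR]
end

section
/- Let n ≥ 1 and s ∈ (0,1), and let u₀ : ℝⁿ → [0,∞) be a nonnegative locally integrable function with ∫_{ℝⁿ} u₀(x) dx = +∞. Define u(x,t) = ∫_{ℝⁿ} P(x−y,t;s) u₀(y) dy (a well-defined value in [0,∞]). Then for every x ∈ ℝⁿ, lim_{t→∞} t^{n/(2s)} u(x,t) = +∞. In particular, convergence to a multiple of the fundamental solution fails for all nonnegative data of infinite mass. -/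
open MeasureTheory Real Filter
open scoped ENNReal

lemma radial_cont {n : ℕ} {c p : ℝ} (hp : 0 ≤ p) (m : ℕ) :
    Continuous fun x : EuclideanSpace ℝ (Fin n) => ‖x‖ ^ m * rexp (-(c * ‖x‖ ^ p)) :=
  (continuous_norm.pow m).mul
    (Real.continuous_exp.comp
      ((continuous_const.mul (continuous_norm.rpow_const fun _ => Or.inr hp)).neg))

lemma radial_bound {c p : ℝ} (hc : 0 < c) (hp : 0 < p) (m d : ℕ) :
    ∃ C : ℝ, ∀ r : ℝ, 0 ≤ r → (1 + r) ^ d * (r ^ m * rexp (-(c * r ^ p))) ≤ C := by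
  set g : ℝ → ℝ := fun r => (1 + r) ^ d * (r ^ m * rexp (-(c * r ^ p))) with hg
  have hg0 : Tendsto g atTop (nhds 0) := by
    have h1 : Tendsto (fun u : ℝ => 2 ^ d * (u ^ (((d + m : ℕ) : ℝ) / p) * rexp (-c * u)))
        atTop (nhds 0) := by
      simpa using
        (tendsto_rpow_mul_exp_neg_mul_atTop_nhds_zero (((d + m : ℕ) : ℝ) / p) c hc).const_mul
          ((2:ℝ) ^ d)
    have h2 : Tendsto (fun r : ℝ => r ^ p) atTop atTop := tendsto_rpow_atTop hp
    have h3 := h1.comp h2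
    apply squeeze_zero_norm' _ h3
    filter_upwards [eventually_ge_atTop (1:ℝ)] with r hr
    have hr0 : (0:ℝ) < r := lt_of_lt_of_le one_pos hr
    have hnn : 0 ≤ g r := by positivity
    rw [Real.norm_of_nonneg hnn]
    have key : (r ^ p) ^ (((d + m : ℕ) : ℝ) / p) = r ^ (d + m) := by
      rw [← Real.rpow_natCast r (d + m), ← Real.rpow_mul hr0.le]
      congr 1
      field_simp
    simp only [Function.comp]
    rw [key]
    have h4 : (1 + r) ^ d ≤ (2 * r) ^ d := by
      apply pow_le_pow_left₀ (by linarith) (by linarith)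
    calc g r ≤ (2*r) ^ d * (r ^ m * rexp (-(c * r ^ p))) := by
          apply mul_le_mul_of_nonneg_right h4 (by positivity)
      _ = 2 ^ d * (r ^ (d + m) * rexp (-c * r ^ p)) := by rw [mul_pow, pow_add]; ring_nf
  have hev : ∀ᶠ r in atTop, g r < 1 := hg0.eventually (gt_mem_nhds one_pos)
  obtain ⟨R, hR⟩ := hev.exists_forall_of_atTop
  have hgc : Continuous g := by
    apply Continuous.mul (by continuity)
    apply Continuous.mul (by continuity)
    exact Real.continuous_exp.comp
      ((continuous_const.mul (continuous_id.rpow_const fun _ => Or.inr hp.le)).neg)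
  obtain ⟨C1, hC1⟩ := (isCompact_Icc (a := (0:ℝ)) (b := max R 0)).exists_bound_of_continuousOn
    hgc.continuousOn
  refine ⟨max C1 1, fun r hr0 => ?_⟩
  rcases le_or_gt r (max R 0) with h | h
  · have := hC1 r ⟨hr0, h⟩
    calc g r ≤ ‖g r‖ := le_norm_self _
      _ ≤ C1 := this
      _ ≤ max C1 1 := le_max_left _ _
  · exact le_trans (hR r (le_of_lt (lt_of_le_of_lt (le_max_left R 0) h))).le (le_max_right _ _)

lemma radial_integrable {n : ℕ} {c p : ℝ} (hc : 0 < c) (hp : 0 < p) (m : ℕ) :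
    Integrable (fun x : EuclideanSpace ℝ (Fin n) => ‖x‖ ^ m * rexp (-(c * ‖x‖ ^ p))) := by
  obtain ⟨C, hC⟩ := radial_bound hc hp m (n + 1)
  have hC0 : 0 ≤ C := le_trans (by positivity) (hC 0 le_rfl)
  have hInt : Integrable (fun x : EuclideanSpace ℝ (Fin n) => C * (1 + ‖x‖) ^ (-((n:ℝ)+1))) := by
    apply Integrable.const_mul
    apply integrable_one_add_norm (r := (n:ℝ)+1)
    rw [finrank_euclideanSpace_fin]
    linarith
  apply hInt.mono' (radial_cont hp.le m).aestronglyMeasurable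
  filter_upwards with x
  have h1 : (0:ℝ) < 1 + ‖x‖ := by positivity
  have h2 : (1 + ‖x‖) ^ (-((n:ℝ)+1)) = ((1 + ‖x‖) ^ (n+1 : ℕ))⁻¹ := by
    rw [← Real.rpow_natCast (1 + ‖x‖) (n+1), ← Real.rpow_neg h1.le]
    norm_num
  rw [Real.norm_of_nonneg (by positivity), h2, mul_comm C, ← div_eq_inv_mul,
    le_div_iff₀ (by positivity)]
  calc ‖x‖ ^ m * rexp (-(c * ‖x‖ ^ p)) * (1 + ‖x‖) ^ (n + 1)
      = (1 + ‖x‖) ^ (n + 1) * (‖x‖ ^ m * rexp (-(c * ‖x‖ ^ p))) := by ring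
    _ ≤ C := hC ‖x‖ (norm_nonneg x)


lemma radial_scaling {n : ℕ} {p t : ℝ} (hp : 0 < p) (ht : 0 < t) (m : ℕ) :
    ∫ ξ : EuclideanSpace ℝ (Fin n), ‖ξ‖ ^ m * rexp (-(t * ‖ξ‖ ^ p)) =
      t ^ (-(((n + m : ℕ) : ℝ)) / p) *
        ∫ ξ : EuclideanSpace ℝ (Fin n), ‖ξ‖ ^ m * rexp (-(1 * ‖ξ‖ ^ p)) := by
  set c : ℝ := t ^ (1 / p) with hcdef
  have hc : 0 < c := rpow_pos_of_pos ht _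
  set f : EuclideanSpace ℝ (Fin n) → ℝ := fun η => ‖η‖ ^ m * rexp (-(1 * ‖η‖ ^ p)) with hf
  have hcp : c ^ p = t := by
    rw [hcdef, ← Real.rpow_mul ht.le, one_div, inv_mul_cancel₀ hp.ne', Real.rpow_one]
  have key : ∀ ξ : EuclideanSpace ℝ (Fin n),
      f (c • ξ) = c ^ m * (‖ξ‖ ^ m * rexp (-(t * ‖ξ‖ ^ p))) := by
    intro ξ
    have hnorm : ‖c • ξ‖ = c * ‖ξ‖ := by
      rw [norm_smul, Real.norm_of_nonneg hc.le]
    rw [hf]; simp only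
    rw [hnorm, mul_pow, Real.mul_rpow hc.le (norm_nonneg ξ), hcp]
    ring
  have h1 : ∫ ξ : EuclideanSpace ℝ (Fin n), f (c • ξ) =
      (c ^ Module.finrank ℝ (EuclideanSpace ℝ (Fin n)))⁻¹ • ∫ ξ, f ξ :=
    MeasureTheory.Measure.integral_comp_smul_of_nonneg volume f c (hR := hc.le)
  simp only [key, finrank_euclideanSpace_fin, smul_eq_mul] at h1
  rw [integral_const_mul] at h1
  have hcm : (c:ℝ) ^ m ≠ 0 := by positivity
  have h2 : ∫ ξ : EuclideanSpace ℝ (Fin n), ‖ξ‖ ^ m * rexp (-(t * ‖ξ‖ ^ p)) =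
      (c ^ m)⁻¹ * ((c ^ n)⁻¹ * ∫ ξ, f ξ) := by
    rw [← h1]; field_simp
  rw [h2, hf, ← mul_assoc]
  congr 1
  rw [← mul_inv, ← pow_add, hcdef, ← Real.rpow_natCast (t ^ (1/p)) (m + n),
    ← Real.rpow_mul ht.le, ← Real.rpow_neg_one (t ^ ((1/p) * ((m+n:ℕ):ℝ))),
    ← Real.rpow_mul ht.le]
  congr 1
  push_cast
  field_simp
  ring

lemma fracP_lower {n : ℕ} {s t : ℝ} (hs : 0 < s) (ht : 0 < t)
    (z : EuclideanSpace ℝ (Fin n)) :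
    ((2 * π) ^ n)⁻¹ * ((∫ ξ : EuclideanSpace ℝ (Fin n), rexp (-(t * ‖ξ‖ ^ (2*s)))) -
      ‖z‖ ^ 2 / 2 * ∫ ξ : EuclideanSpace ℝ (Fin n), ‖ξ‖ ^ 2 * rexp (-(t * ‖ξ‖ ^ (2*s))))
      ≤ fracP n s z t := by
  have hp : (0:ℝ) < 2 * s := by linarith
  have h0 : Integrable (fun ξ : EuclideanSpace ℝ (Fin n) => rexp (-(t * ‖ξ‖ ^ (2*s)))) := by
    simpa using radial_integrable (n := n) ht hp 0
  have h2 : Integrable (fun ξ : EuclideanSpace ℝ (Fin n) => ‖ξ‖^2 * rexp (-(t * ‖ξ‖ ^ (2*s)))) :=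
    radial_integrable ht hp 2
  set F : EuclideanSpace ℝ (Fin n) → ℂ := fun ξ =>
    Complex.exp (Complex.I * ((inner ℝ z ξ : ℝ) : ℂ)) *
      Complex.exp (-(t : ℂ) * ((‖ξ‖ ^ (2 * s) : ℝ) : ℂ)) with hF
  have hcont : Continuous F := by
    apply Continuous.mul
    · exact Complex.continuous_exp.comp (continuous_const.mul
        (Complex.continuous_ofReal.comp ((continuous_const).inner continuous_id)))
    · exact Complex.continuous_exp.comp (continuous_const.mul
        (Complex.continuous_ofReal.comp (continuous_norm.rpow_const fun _ => Or.inr hp.le)))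
  have hFnorm : ∀ ξ, ‖F ξ‖ = rexp (-(t * ‖ξ‖ ^ (2*s))) := by
    intro ξ
    rw [hF]
    simp only [norm_mul, Complex.norm_exp]
    simp [Complex.mul_re, Complex.I_re, Complex.I_im, neg_mul]
  have hFint : Integrable F := by
    apply h0.mono' hcont.aestronglyMeasurable
    filter_upwards with ξ
    rw [hFnorm]
  have hre : ∀ ξ : EuclideanSpace ℝ (Fin n),
      (F ξ).re = Real.cos (inner ℝ z ξ : ℝ) * rexp (-(t * ‖ξ‖ ^ (2*s))) := by
    intro ξ
    rw [hF]
    simp only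
    have e1 : (-(t : ℂ) * ((‖ξ‖ ^ (2 * s) : ℝ) : ℂ)) = ((-(t * ‖ξ‖ ^ (2*s)) : ℝ) : ℂ) := by
      push_cast; ring
    rw [e1, ← Complex.ofReal_exp, mul_comm Complex.I, mul_comm (Complex.exp _),
      Complex.re_ofReal_mul, Complex.exp_ofReal_mul_I_re]
    ring
  have hre2 : (∫ ξ, F ξ).re =
      ∫ ξ : EuclideanSpace ℝ (Fin n), Real.cos (inner ℝ z ξ : ℝ) * rexp (-(t * ‖ξ‖ ^ (2*s))) := by
    have h := integral_re (𝕜 := ℂ) hFint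
    simp only [RCLike.re_to_complex] at h
    rw [← h]
    exact (integral_congr_ae (Filter.Eventually.of_forall fun ξ => (hre ξ).symm)).symm
  have hcos_int : Integrable (fun ξ : EuclideanSpace ℝ (Fin n) =>
      Real.cos (inner ℝ z ξ : ℝ) * rexp (-(t * ‖ξ‖ ^ (2*s)))) := by
    apply h0.mono'
    · exact ((Real.continuous_cos.comp ((continuous_const).inner continuous_id)).mul
        (Real.continuous_exp.comp ((continuous_const.mul
          (continuous_norm.rpow_const fun _ => Or.inr hp.le)).neg))).aestronglyMeasurable
    · filter_upwards with ξ
      rw [Real.norm_eq_abs, abs_mul, Real.abs_exp]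
      calc |Real.cos (inner ℝ z ξ : ℝ)| * rexp (-(t * ‖ξ‖ ^ (2*s)))
          ≤ 1 * rexp (-(t * ‖ξ‖ ^ (2*s))) := by
            apply mul_le_mul_of_nonneg_right (Real.abs_cos_le_one _) (Real.exp_nonneg _)
        _ = rexp (-(t * ‖ξ‖ ^ (2*s))) := one_mul _
  have hmono : (∫ ξ : EuclideanSpace ℝ (Fin n), rexp (-(t * ‖ξ‖ ^ (2*s)))) -
      ‖z‖ ^ 2 / 2 * (∫ ξ : EuclideanSpace ℝ (Fin n), ‖ξ‖ ^ 2 * rexp (-(t * ‖ξ‖ ^ (2*s)))) ≤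
      ∫ ξ : EuclideanSpace ℝ (Fin n), Real.cos (inner ℝ z ξ : ℝ) * rexp (-(t * ‖ξ‖ ^ (2*s))) := by
    rw [← integral_const_mul, ← integral_sub h0 (h2.const_mul _)]
    apply integral_mono (h0.sub (h2.const_mul _)) hcos_int
    intro ξ
    simp only
    have hθ : (inner ℝ z ξ : ℝ) ^ 2 ≤ ‖z‖ ^ 2 * ‖ξ‖ ^ 2 := by
      rw [← mul_pow, ← sq_abs (inner ℝ z ξ : ℝ)]
      exact pow_le_pow_left₀ (abs_nonneg _) (abs_real_inner_le_norm z ξ) 2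
    have hcos : 1 - ‖z‖ ^ 2 * ‖ξ‖ ^ 2 / 2 ≤ Real.cos (inner ℝ z ξ : ℝ) := by
      refine le_trans ?_ Real.one_sub_sq_div_two_le_cos
      linarith
    have hnn : 0 ≤ rexp (-(t * ‖ξ‖ ^ (2*s))) := Real.exp_nonneg _
    calc rexp (-(t * ‖ξ‖ ^ (2*s))) - ‖z‖^2/2 * (‖ξ‖^2 * rexp (-(t * ‖ξ‖ ^ (2*s))))
        = (1 - ‖z‖ ^ 2 * ‖ξ‖ ^ 2 / 2) * rexp (-(t * ‖ξ‖ ^ (2*s))) := by ring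
      _ ≤ Real.cos (inner ℝ z ξ : ℝ) * rexp (-(t * ‖ξ‖ ^ (2*s))) :=
          mul_le_mul_of_nonneg_right hcos hnn
  rw [fracP]
  have hpos : (0:ℝ) ≤ ((2 * π) ^ n)⁻¹ := by positivity
  apply mul_le_mul_of_nonneg_left _ hpos
  rw [← hre2] at hmono
  exact hmono

theorem fracHeat_infinite_mass_divergence
    (n : ℕ) (hn : 1 ≤ n) (s : ℝ) (hs : s ∈ Set.Ioo (0:ℝ) 1)
    (u₀ : EuclideanSpace ℝ (Fin n) → ℝ) (h0 : ∀ x, 0 ≤ u₀ x)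
    (hloc : LocallyIntegrable u₀)
    (hmass : ∫⁻ x, ENNReal.ofReal (u₀ x) = ⊤) :
    ∀ x : EuclideanSpace ℝ (Fin n),
      Tendsto (fun t : ℝ => ENNReal.ofReal (t ^ ((n : ℝ) / (2 * s))) *
          ∫⁻ y, ENNReal.ofReal (fracP n s (x - y) t * u₀ y))
        atTop (nhds ⊤) := by
  obtain ⟨hs0, hs1⟩ := hs
  intro x
  have hp : (0:ℝ) < 2 * s := by linarith
  set A : ℝ := ∫ ξ : EuclideanSpace ℝ (Fin n), rexp (-(1 * ‖ξ‖ ^ (2*s))) with hAdef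
  set B : ℝ := ∫ ξ : EuclideanSpace ℝ (Fin n), ‖ξ‖ ^ 2 * rexp (-(1 * ‖ξ‖ ^ (2*s))) with hBdef
  have hAint : Integrable (fun ξ : EuclideanSpace ℝ (Fin n) => rexp (-(1 * ‖ξ‖ ^ (2*s)))) := by
    simpa using radial_integrable (n := n) one_pos hp 0
  have hA0 : 0 < A := by
    rw [hAdef, integral_pos_iff_support_of_nonneg (fun ξ => Real.exp_nonneg _) hAint]
    have hsupp : Function.support (fun ξ : EuclideanSpace ℝ (Fin n) =>
        rexp (-(1 * ‖ξ‖ ^ (2*s)))) = Set.univ :=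
      Set.eq_univ_of_forall fun ξ => (Real.exp_pos _).ne'
    rw [hsupp]
    exact isOpen_univ.measure_pos volume Set.univ_nonempty
  have hB0 : 0 ≤ B := integral_nonneg fun ξ => by positivity
  have hπ : (0:ℝ) < 2 * π := by positivity
  set c₀ : ℝ := ((2 * π) ^ n)⁻¹ * (A / 2) with hc₀def
  have hc₀ : 0 < c₀ := by rw [hc₀def]; positivity
  apply ENNReal.tendsto_nhds_top
  intro N
  -- choose a ball carrying enough mass
  have hmeasA : AEMeasurable (fun y => ENNReal.ofReal (u₀ y)) :=
    ENNReal.measurable_ofReal.comp_aemeasurable hloc.aestronglyMeasurable.aemeasurable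
  set f' := hmeasA.mk _ with hf'def
  have hf'meas : Measurable f' := hmeasA.measurable_mk
  have hf'ae : (fun y => ENNReal.ofReal (u₀ y)) =ᵐ[volume] f' := hmeasA.ae_eq_mk
  have hind : ∀ y : EuclideanSpace ℝ (Fin n),
      (⨆ k : ℕ, (Metric.ball (0 : EuclideanSpace ℝ (Fin n)) (k:ℝ)).indicator f' y) = f' y := by
    intro y
    obtain ⟨k, hk⟩ := exists_nat_gt ‖y‖
    apply le_antisymm
    · exact iSup_le fun j => Set.indicator_le_self _ _ y
    · refine le_iSup_of_le k ?_
      rw [Set.indicator_of_mem (by simpa [mem_ball_zero_iff] using hk)]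
  have hmono : Monotone fun k : ℕ =>
      (Metric.ball (0 : EuclideanSpace ℝ (Fin n)) (k:ℝ)).indicator f' := by
    intro i j hij
    exact Set.indicator_le_indicator_of_subset
      (Metric.ball_subset_ball (Nat.cast_le.mpr hij)) (fun _ => zero_le)
  have hsup : (⨆ k : ℕ, ∫⁻ y in Metric.ball (0 : EuclideanSpace ℝ (Fin n)) (k:ℝ), f' y) = ⊤ := by
    have h1 : ∫⁻ y, f' y = ⊤ := by rw [← lintegral_congr_ae hf'ae]; exact hmass
    calc (⨆ k : ℕ, ∫⁻ y in Metric.ball (0 : EuclideanSpace ℝ (Fin n)) (k:ℝ), f' y)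
        = ⨆ k : ℕ, ∫⁻ y, (Metric.ball (0 : EuclideanSpace ℝ (Fin n)) (k:ℝ)).indicator f' y := by
          refine iSup_congr fun k => ?_
          rw [lintegral_indicator measurableSet_ball]
      _ = ∫⁻ y, ⨆ k : ℕ, (Metric.ball (0 : EuclideanSpace ℝ (Fin n)) (k:ℝ)).indicator f' y :=
          (lintegral_iSup (fun k => hf'meas.indicator measurableSet_ball) hmono).symm
      _ = ∫⁻ y, f' y := lintegral_congr fun y => hind y
      _ = ⊤ := h1
  have hc₀0 : ENNReal.ofReal c₀ ≠ 0 := (ENNReal.ofReal_pos.mpr hc₀).ne'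
  have hLlt : ((N : ℝ≥0∞) + 1) / ENNReal.ofReal c₀ < ⊤ :=
    ENNReal.div_lt_top (by simp) hc₀0
  obtain ⟨k, hk⟩ : ∃ k : ℕ, ((N : ℝ≥0∞) + 1) / ENNReal.ofReal c₀ <
      ∫⁻ y in Metric.ball (0 : EuclideanSpace ℝ (Fin n)) (k:ℝ), f' y :=
    lt_iSup_iff.mp (by rw [hsup]; exact hLlt)
  set m : ℝ≥0∞ := ∫⁻ y in Metric.ball (0 : EuclideanSpace ℝ (Fin n)) (k:ℝ),
    ENNReal.ofReal (u₀ y) with hmdef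
  have hmk : ((N : ℝ≥0∞) + 1) / ENNReal.ofReal c₀ < m := by
    rw [hmdef, lintegral_congr_ae (ae_restrict_of_ae hf'ae)]
    exact hk
  have hNm : (N : ℝ≥0∞) < ENNReal.ofReal c₀ * m := by
    have h1 : ENNReal.ofReal c₀ * (((N : ℝ≥0∞) + 1) / ENNReal.ofReal c₀) ≤
        ENNReal.ofReal c₀ * m := mul_le_mul_right hmk.le _
    rw [ENNReal.mul_div_cancel hc₀0 ENNReal.ofReal_ne_top] at h1
    exact lt_of_lt_of_le (ENNReal.lt_add_right (by simp) one_ne_zero) h1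
  -- eventual kernel estimate
  set R : ℝ := ‖x‖ + k with hRdef
  have hR0 : 0 ≤ R := by rw [hRdef]; positivity
  have h1s : (0:ℝ) < 1 / s := by positivity
  filter_upwards [eventually_ge_atTop (1:ℝ),
    (tendsto_rpow_atTop h1s).eventually_ge_atTop (R ^ 2 * B / A)] with t ht1 ht2
  have ht : (0:ℝ) < t := lt_of_lt_of_le one_pos ht1
  have hker : ∀ y ∈ Metric.ball (0 : EuclideanSpace ℝ (Fin n)) (k:ℝ),
      c₀ * t ^ (-(n:ℝ)/(2*s)) ≤ fracP n s (x - y) t := by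
    intro y hy
    have hyk : ‖y‖ < k := by simpa [mem_ball_zero_iff] using hy
    have hxy : ‖x - y‖ ≤ R := le_trans (norm_sub_le x y) (by rw [hRdef]; linarith)
    have hI0 : ∫ ξ : EuclideanSpace ℝ (Fin n), rexp (-(t * ‖ξ‖ ^ (2*s))) =
        t ^ (-(n:ℝ)/(2*s)) * A := by
      have h := radial_scaling (n := n) hp ht 0
      simpa [hAdef] using h
    have hI2 : ∫ ξ : EuclideanSpace ℝ (Fin n), ‖ξ‖ ^ 2 * rexp (-(t * ‖ξ‖ ^ (2*s))) =
        t ^ (-((n:ℝ)+2)/(2*s)) * B := by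
      have h := radial_scaling (n := n) hp ht 2
      rw [h, hBdef]
      norm_num
    refine le_trans ?_ (fracP_lower hs0 ht (x - y))
    rw [hI0, hI2, hc₀def]
    rw [mul_assoc]
    apply mul_le_mul_of_nonneg_left _ (by positivity)
    -- A / 2 * t ^ (-(n)/(2s)) ≤ t^(-(n)/(2s)) * A - ‖x-y‖²/2 * (t^(-(n+2))/(2s)) * B)
    have hsplit : t ^ (-((n:ℝ)+2)/(2*s)) = t ^ (-(n:ℝ)/(2*s)) * t ^ (-(1/s) : ℝ) := by
      rw [← Real.rpow_add ht]
      congr 1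
      field_simp
      ring
    have htpos : (0:ℝ) < t ^ (-(n:ℝ)/(2*s)) := rpow_pos_of_pos ht _
    have hts : t ^ (-(1/s) : ℝ) * t ^ (1/s : ℝ) = 1 := by
      rw [← Real.rpow_add ht]; norm_num
    have htneg : (0:ℝ) ≤ t ^ (-(1/s) : ℝ) := (rpow_pos_of_pos ht _).le
    have hkey : ‖x - y‖ ^ 2 / 2 * (t ^ (-((n:ℝ)+2)/(2*s)) * B) ≤
        A / 2 * t ^ (-(n:ℝ)/(2*s)) := by
      rw [hsplit]
      have hRB : ‖x - y‖ ^ 2 * B ≤ A * t ^ (1/s : ℝ) := by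
        have h1 : ‖x - y‖ ^ 2 * B ≤ R ^ 2 * B := by
          apply mul_le_mul_of_nonneg_right _ hB0
          exact pow_le_pow_left₀ (norm_nonneg _) hxy 2
        have h2 : R ^ 2 * B ≤ A * t ^ (1/s : ℝ) := by
          rw [← div_le_iff₀' hA0]
          exact le_trans (le_of_eq (by ring)) ht2
        exact le_trans h1 h2
      have h3 : ‖x - y‖ ^ 2 * B * t ^ (-(1/s) : ℝ) ≤ A := by
        calc ‖x - y‖ ^ 2 * B * t ^ (-(1/s) : ℝ)
            ≤ A * t ^ (1/s : ℝ) * t ^ (-(1/s) : ℝ) :=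
              mul_le_mul_of_nonneg_right hRB htneg
          _ = A := by rw [mul_assoc, mul_comm (t ^ (1/s : ℝ)), hts, mul_one]
      calc ‖x - y‖ ^ 2 / 2 * (t ^ (-(n:ℝ)/(2*s)) * t ^ (-(1/s) : ℝ) * B)
          = t ^ (-(n:ℝ)/(2*s)) * (‖x - y‖ ^ 2 * B * t ^ (-(1/s) : ℝ)) / 2 := by ring
        _ ≤ t ^ (-(n:ℝ)/(2*s)) * A / 2 := by
            gcongr
        _ = A / 2 * t ^ (-(n:ℝ)/(2*s)) := by ring
    linarith
  -- lintegral chain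
  have hchain : ENNReal.ofReal (c₀ * t ^ (-(n:ℝ)/(2*s))) * m ≤
      ∫⁻ y, ENNReal.ofReal (fracP n s (x - y) t * u₀ y) := by
    have htnn : 0 ≤ c₀ * t ^ (-(n:ℝ)/(2*s)) := by positivity
    calc ENNReal.ofReal (c₀ * t ^ (-(n:ℝ)/(2*s))) * m
        = ∫⁻ y in Metric.ball (0 : EuclideanSpace ℝ (Fin n)) (k:ℝ),
            ENNReal.ofReal (c₀ * t ^ (-(n:ℝ)/(2*s))) * ENNReal.ofReal (u₀ y) :=
          (lintegral_const_mul' _ _ ENNReal.ofReal_ne_top).symm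
      _ ≤ ∫⁻ y in Metric.ball (0 : EuclideanSpace ℝ (Fin n)) (k:ℝ),
            ENNReal.ofReal (fracP n s (x - y) t * u₀ y) := by
          apply setLIntegral_mono' measurableSet_ball
          intro y hy
          rw [← ENNReal.ofReal_mul htnn]
          exact ENNReal.ofReal_le_ofReal
            (mul_le_mul_of_nonneg_right (hker y hy) (h0 y))
      _ ≤ ∫⁻ y, ENNReal.ofReal (fracP n s (x - y) t * u₀ y) :=
          setLIntegral_le_lintegral _ _
  calc (N : ℝ≥0∞) < ENNReal.ofReal c₀ * m := hNm
    _ = ENNReal.ofReal (t ^ ((n : ℝ) / (2 * s))) *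
        (ENNReal.ofReal (c₀ * t ^ (-(n:ℝ)/(2*s))) * m) := by
        rw [← mul_assoc, ← ENNReal.ofReal_mul (by positivity)]
        congr 2
        rw [mul_comm c₀, ← mul_assoc, ← Real.rpow_add ht]
        have : (n : ℝ) / (2 * s) + (-(n:ℝ)/(2*s)) = 0 := by ring
        rw [this, Real.rpow_zero, one_mul]
    _ ≤ ENNReal.ofReal (t ^ ((n : ℝ) / (2 * s))) *
        ∫⁻ y, ENNReal.ofReal (fracP n s (x - y) t * u₀ y) := mul_le_mul_right hchain _
end
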